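/- arXiv:1011.3093 — 10 statements merged into one kernel-verified Lean document; each statement's English description precedes it below -/
import Mathlib

section
/- For every positive integer r, the sum C_r := \sum_{\ell=0}^{r-1} \binom{r-1}{\ell} \frac{(-1)^{\ell}}{\ell+1} (H(\ell) - 2H(2\ell+1)) equals -\frac{(2r)!!}{r^2 (2r-1)!!}, i.e. C_r = -\frac{2^{2r} (r!)^2}{r^2 (2r)!}. -/
/-- Harmonic number `H(n) = ∑_{k=1}^{n} 1/k`, with `H(n) = 0` for `n ≤ 0`. -/
noncomputable def harmonicH (n : ℤ) : ℚ := ∑ k ∈ Finset.Icc (1 : ℤ) n, (1 : ℚ) / (k : ℚ)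

open Finset

/-- Sum of reciprocals of the first `n+1` odd numbers. -/
def oddH (n : ℕ) : ℚ := ∑ j ∈ range (n+1), (1:ℚ)/(2*(j:ℚ)+1)

lemma harmonicH_zero : harmonicH 0 = 0 := by simp [harmonicH]

lemma harmonicH_succ (n : ℕ) : harmonicH ((n:ℤ)+1) = harmonicH n + 1/((n:ℚ)+1) := by
  unfold harmonicH
  have h : Finset.Icc (1:ℤ) ((n:ℤ)+1) = insert ((n:ℤ)+1) (Finset.Icc (1:ℤ) (n:ℤ)) := by
    ext x; simp only [Finset.mem_Icc, Finset.mem_insert]; omega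
  rw [h, Finset.sum_insert (by simp [Finset.mem_Icc])]
  push_cast
  ring

lemma keyH (ℓ : ℕ) : harmonicH (ℓ:ℤ) - 2 * harmonicH (2*(ℓ:ℤ)+1) = -2 * oddH ℓ := by
  induction ℓ with
  | zero =>
    have h := harmonicH_succ 0
    norm_num [harmonicH_zero] at h
    show harmonicH ((0:ℕ):ℤ) - 2 * harmonicH (2*((0:ℕ):ℤ)+1) = -2 * oddH 0
    norm_num [harmonicH_zero, oddH, h]
  | succ m ih =>
    have hm : ((m:ℚ)+1) ≠ 0 := by positivity
    have A : harmonicH (2*(m:ℤ)+2) = harmonicH (2*(m:ℤ)+1) + 1/(2*(m:ℚ)+2) := by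
      have h := harmonicH_succ (2*m+1)
      push_cast at h
      rw [show (2*(m:ℤ)+1+1) = 2*(m:ℤ)+2 from by ring,
          show (2*(m:ℚ)+1+1) = 2*(m:ℚ)+2 from by ring] at h
      exact h
    have B : harmonicH (2*(m:ℤ)+3) = harmonicH (2*(m:ℤ)+2) + 1/(2*(m:ℚ)+3) := by
      have h := harmonicH_succ (2*m+2)
      push_cast at h
      rw [show (2*(m:ℤ)+2+1) = 2*(m:ℤ)+3 from by ring,
          show (2*(m:ℚ)+2+1) = 2*(m:ℚ)+3 from by ring] at h
      exact h
    have C : harmonicH ((m:ℤ)+1) = harmonicH m + 1/((m:ℚ)+1) := harmonicH_succ m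
    have D : oddH (m+1) = oddH m + 1/(2*(m:ℚ)+3) := by
      rw [oddH, oddH, sum_range_succ]
      congr 1
      push_cast; ring
    have E : (1:ℚ)/(2*(m:ℚ)+2) = 1/2 * (1/((m:ℚ)+1)) := by
      field_simp
    push_cast
    rw [show (2*((m:ℤ)+1)+1) = 2*(m:ℤ)+3 from by ring, B, A, C, D]
    linarith [ih, E]

/-- `∑_{ℓ=0}^{n} (-1)^ℓ C(n,ℓ)/(2ℓ+2m+1) = n! 2^n / ∏_{i=0}^{n} (2m+2i+1)`. -/
lemma V_eq (n : ℕ) : ∀ m : ℕ, ∑ ℓ ∈ range (n+1), (-1:ℚ)^ℓ * (n.choose ℓ) / (2*ℓ+2*m+1)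
    = (n.factorial * 2^n) / ∏ i ∈ range (n+1), (2*(m:ℚ)+2*i+1) := by
  induction n with
  | zero => intro m; norm_num
  | succ n ih =>
    intro m
    have split : ∑ ℓ ∈ range (n+2), (-1:ℚ)^ℓ * ((n+1).choose ℓ) / (2*ℓ+2*m+1)
        = (∑ ℓ ∈ range (n+1), (-1:ℚ)^ℓ * (n.choose ℓ) / (2*ℓ+2*m+1))
          - (∑ ℓ ∈ range (n+1), (-1:ℚ)^ℓ * (n.choose ℓ) / (2*ℓ+2*((m+1:ℕ):ℚ)+1)) := by
      rw [Finset.sum_range_succ' (fun ℓ => (-1:ℚ)^ℓ * ((n+1).choose ℓ) / (2*ℓ+2*m+1)) (n+1)]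
      have e2 : ∀ i ∈ range (n+1), (-1:ℚ)^(i+1) * ((n+1).choose (i+1)) / (2*((i+1:ℕ):ℚ)+2*m+1)
          = (-1:ℚ)^(i+1) * (n.choose (i+1)) / (2*((i+1:ℕ):ℚ)+2*m+1)
            - (-1:ℚ)^i * (n.choose i) / (2*i+2*((m+1:ℕ):ℚ)+1) := by
        intro i _
        rw [Nat.choose_succ_succ]
        push_cast
        ring
      rw [Finset.sum_congr rfl e2, Finset.sum_sub_distrib]
      rw [Finset.sum_range_succ' (fun ℓ => (-1:ℚ)^ℓ * (n.choose ℓ) / (2*ℓ+2*m+1)) n]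
      rw [Finset.sum_range_succ (fun i => (-1:ℚ)^(i+1) * ((n.choose (i+1)):ℚ) / (2*((i+1:ℕ):ℚ)+2*m+1)) n]
      simp [Nat.choose_succ_self]
      ring
    rw [split, ih m, ih (m+1)]
    have h1 : (∏ i ∈ range (n+1), (2*(m:ℚ)+2*i+1)) ≠ 0 := by
      apply ne_of_gt; apply Finset.prod_pos; intro i _; positivity
    have h2 : (∏ i ∈ range (n+1), (2*((m+1:ℕ):ℚ)+2*i+1)) ≠ 0 := by
      apply ne_of_gt; apply Finset.prod_pos; intro i _; positivity
    have h3 : (∏ i ∈ range (n+1+1), (2*(m:ℚ)+2*i+1)) ≠ 0 := by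
      apply ne_of_gt; apply Finset.prod_pos; intro i _; positivity
    have p1 : ∏ i ∈ range (n+2), (2*(m:ℚ)+2*i+1)
        = (∏ i ∈ range (n+1), (2*(m:ℚ)+2*i+1)) * (2*(m:ℚ)+2*(n+1)+1) := by
      rw [Finset.prod_range_succ]; push_cast; ring
    have p2 : ∏ i ∈ range (n+2), (2*(m:ℚ)+2*i+1)
        = (2*(m:ℚ)+1) * ∏ i ∈ range (n+1), (2*((m+1:ℕ):ℚ)+2*i+1) := by
      rw [Finset.prod_range_succ' (fun i => (2*(m:ℚ)+2*(i:ℚ)+1)) (n+1)]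
      have e3 : ∀ i ∈ range (n+1), (2*(m:ℚ)+2*((i+1:ℕ):ℚ)+1) = (2*((m+1:ℕ):ℚ)+2*(i:ℚ)+1) := by
        intro i _; push_cast; ring
      rw [Finset.prod_congr rfl e3]
      push_cast
      ring
    rw [div_sub_div _ _ h1 h2, div_eq_div_iff (mul_ne_zero h1 h2) h3]
    push_cast [Nat.factorial_succ] at p1 p2 ⊢
    linear_combination (((n.factorial:ℚ)*2^n) * (∏ i ∈ range (n+1), (2*((m:ℚ)+1)+2*i+1))) * p1
      - (((n.factorial:ℚ)*2^n) * (∏ i ∈ range (n+1), (2*(m:ℚ)+2*i+1))) * p2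

lemma A_eq (n : ℕ) :
    ∑ ℓ ∈ range (n+1), ((n+1).choose (ℓ+1) : ℚ) * (-1)^ℓ * oddH ℓ
    = ∑ ℓ ∈ range (n+1), (-1:ℚ)^ℓ * (n.choose ℓ) / (2*ℓ+1) := by
  have e1 : ∀ ℓ ∈ range (n+1), ((n+1).choose (ℓ+1) : ℚ) * (-1)^ℓ * oddH ℓ
      = ((n.choose ℓ : ℚ) * (-1)^ℓ * (∑ j ∈ range ℓ, (1:ℚ)/(2*(j:ℚ)+1))
          + (n.choose (ℓ+1) : ℚ) * (-1)^ℓ * oddH ℓ)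
        + (-1:ℚ)^ℓ * (n.choose ℓ) / (2*ℓ+1) := by
    intro ℓ _
    rw [Nat.choose_succ_succ,
      show oddH ℓ = (∑ j ∈ range ℓ, (1:ℚ)/(2*(j:ℚ)+1)) + 1/(2*(ℓ:ℚ)+1) from by
        rw [oddH, sum_range_succ]]
    push_cast; ring
  rw [sum_congr rfl e1, sum_add_distrib]
  have e2 : ∑ ℓ ∈ range (n+1), ((n.choose ℓ : ℚ) * (-1)^ℓ * (∑ j ∈ range ℓ, (1:ℚ)/(2*(j:ℚ)+1))
      + (n.choose (ℓ+1) : ℚ) * (-1)^ℓ * oddH ℓ) = 0 := by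
    rw [sum_add_distrib]
    rw [Finset.sum_range_succ' (fun ℓ => (n.choose ℓ : ℚ) * (-1)^ℓ * (∑ j ∈ range ℓ, (1:ℚ)/(2*(j:ℚ)+1))) n]
    rw [Finset.sum_range_succ (fun ℓ => (n.choose (ℓ+1) : ℚ) * (-1)^ℓ * oddH ℓ) n]
    simp only [Nat.choose_succ_self, Nat.cast_zero, zero_mul, mul_zero, add_zero,
      Finset.range_zero, Finset.sum_empty]
    have e3 : ∀ i ∈ range n, ((n.choose (i+1) : ℚ)) * (-1)^(i+1) * (∑ j ∈ range (i+1), (1:ℚ)/(2*(j:ℚ)+1))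
        = -((n.choose (i+1) : ℚ) * (-1)^i * oddH i) := by
      intro i _
      rw [oddH]
      ring
    rw [sum_congr rfl e3, Finset.sum_neg_distrib]
    ring
  rw [e2, zero_add]

lemma prod_odd (n : ℕ) :
    (2^n * (n.factorial:ℚ)) * ∏ i ∈ range (n+1), (2*(i:ℚ)+1) = ((2*n+1).factorial : ℚ) := by
  induction n with
  | zero => norm_num
  | succ n ih =>
    rw [prod_range_succ]
    have f1 : ((2*(n+1)+1).factorial : ℚ) = (2*(n:ℚ)+3) * (2*(n:ℚ)+2) * ((2*n+1).factorial) := by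
      rw [show 2*(n+1)+1 = ((2*n+1)+1)+1 from by ring, Nat.factorial_succ, Nat.factorial_succ]
      push_cast; ring
    rw [f1, ← ih, Nat.factorial_succ]
    push_cast; ring

theorem statement0 (r : ℕ) (hr : 1 ≤ r) :
    ∑ ℓ ∈ Finset.range r,
      ((r - 1).choose ℓ : ℚ) * ((-1 : ℚ) ^ ℓ / (ℓ + 1)) *
        (harmonicH ℓ - 2 * harmonicH (2 * ℓ + 1)) =
      -(2 ^ (2 * r) * (r.factorial : ℚ) ^ 2) / ((r : ℚ) ^ 2 * ((2 * r).factorial : ℚ)) := by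
  obtain ⟨n, rfl⟩ : ∃ n, r = n + 1 := ⟨r - 1, (Nat.succ_pred_eq_of_pos hr).symm⟩
  have hsub : n + 1 - 1 = n := rfl
  rw [hsub]
  have hn : ((n:ℚ)+1) ≠ 0 := by positivity
  have term : ∀ ℓ ∈ range (n+1),
      (n.choose ℓ : ℚ) * ((-1 : ℚ) ^ ℓ / (ℓ + 1)) * (harmonicH ℓ - 2 * harmonicH (2 * ℓ + 1))
      = (-2/((n:ℚ)+1)) * (((n+1).choose (ℓ+1) : ℚ) * (-1)^ℓ * oddH ℓ) := by
    intro ℓ _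
    rw [keyH ℓ]
    have hc : ((n:ℚ)+1) * (n.choose ℓ) = ((n+1).choose (ℓ+1) : ℚ) * ((ℓ:ℚ)+1) := by
      exact_mod_cast congrArg (Nat.cast : ℕ → ℚ) (Nat.add_one_mul_choose_eq n ℓ)
    have hl : ((ℓ:ℚ)+1) ≠ 0 := by positivity
    field_simp
    linear_combination (-oddH ℓ) * hc
  rw [sum_congr rfl term, ← Finset.mul_sum, A_eq n]
  have V0 := V_eq n 0
  push_cast at V0
  norm_num at V0
  rw [V0]
  have P := prod_odd n
  have hPne : (∏ i ∈ range (n+1), (2*(i:ℚ)+1)) ≠ 0 := by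
    apply ne_of_gt; apply Finset.prod_pos; intro i _; positivity
  have f1 : ((2*(n+1)).factorial : ℚ) = (2*(n:ℚ)+2) * ((2*n+1).factorial) := by
    rw [show 2*(n+1) = (2*n+1)+1 from by ring, Nat.factorial_succ]
    push_cast; ring
  have f2 : (((n+1)).factorial : ℚ) = ((n:ℚ)+1) * n.factorial := by
    rw [Nat.factorial_succ]; push_cast; ring
  have hf : ((2*n+1).factorial : ℚ) ≠ 0 := by positivity
  rw [f1]
  push_cast [f2]
  rw [div_mul_div_comm, div_eq_div_iff (by positivity) (by positivity)]
  linear_combination ((2:ℚ)^(n+1)*(n.factorial:ℚ)*((n:ℚ)+1)^2*(2*(n:ℚ)+2)) * P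
end

section
/- For all integers r \ge 1 and 1 \le k \le 2r, one has D_r(k) := \sum_{\ell=\lfloor (k-1)/2 \rfloor}^{r-1} 4(-1)^{\ell+k} \binom{r-1}{\ell} \binom{2\ell+1}{k-1} = \binom{r}{k-r} \frac{2k}{r} (-1)^{k+r-1} 2^{2r-k}, where \binom{r}{k-r} is interpreted as 0 when k < r. In particular D_r(k) = 0 for 1 \le k \le r-1. -/
open Finset

def T (n m : ℕ) : ℚ :=
  ∑ ℓ ∈ Finset.range (n+1), (-1:ℚ)^ℓ * (n.choose ℓ : ℚ) * ((2*ℓ+1).choose m : ℚ)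

def F (n m : ℕ) : ℚ :=
  (-1:ℚ)^n * ((if n ≤ m then (n.choose (m-n) : ℚ) else 0) * 4^n / 2^m
    + (if n+1 ≤ m then (n.choose (m-n-1) : ℚ) else 0) * 2 * 4^n / 2^m)

lemma Tstep (n m : ℕ) :
    T (n+1) m = T n m + ∑ ℓ ∈ Finset.range (n+1),
      (-1:ℚ)^(ℓ+1) * (n.choose ℓ : ℚ) * ((2*ℓ+3).choose m : ℚ) := by
  have h : T (n+1) m
      = (∑ ℓ ∈ Finset.range (n+1),
          (-1:ℚ)^(ℓ+1) * ((n+1).choose (ℓ+1) : ℚ) * ((2*(ℓ+1)+1).choose m : ℚ))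
        + (-1:ℚ)^0 * ((n+1).choose 0 : ℚ) * ((2*0+1).choose m : ℚ) := by
    rw [T]
    exact Finset.sum_range_succ' _ (n+1)
  have h2 : ∀ ℓ, (-1:ℚ)^(ℓ+1) * ((n+1).choose (ℓ+1) : ℚ) * ((2*(ℓ+1)+1).choose m : ℚ)
      = (-1:ℚ)^(ℓ+1) * (n.choose ℓ : ℚ) * ((2*ℓ+3).choose m : ℚ)
        + (-1:ℚ)^(ℓ+1) * (n.choose (ℓ+1) : ℚ) * ((2*(ℓ+1)+1).choose m : ℚ) := by
    intro ℓ
    rw [Nat.choose_succ_succ']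
    push_cast
    ring
  rw [h]
  rw [Finset.sum_congr rfl (fun ℓ _ => h2 ℓ), Finset.sum_add_distrib]
  have h3 : (∑ ℓ ∈ Finset.range (n+1),
      (-1:ℚ)^(ℓ+1) * (n.choose (ℓ+1) : ℚ) * ((2*(ℓ+1)+1).choose m : ℚ))
      = (∑ ℓ ∈ Finset.range (n+2), (-1:ℚ)^ℓ * (n.choose ℓ : ℚ) * ((2*ℓ+1).choose m : ℚ))
        - (-1:ℚ)^0 * (n.choose 0 : ℚ) * ((2*0+1).choose m : ℚ) := by
    rw [Finset.sum_range_succ' (fun ℓ => (-1:ℚ)^ℓ * (n.choose ℓ : ℚ) * ((2*ℓ+1).choose m : ℚ)) (n+1)]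
    ring
  rw [h3]
  have h4 : (∑ ℓ ∈ Finset.range (n+2), (-1:ℚ)^ℓ * (n.choose ℓ : ℚ) * ((2*ℓ+1).choose m : ℚ))
      = T n m := by
    rw [Finset.sum_range_succ, T, Nat.choose_succ_self]
    push_cast
    ring
  rw [h4]
  simp
  ring

lemma Trec0 (n : ℕ) : T (n+1) 0 = 0 := by
  rw [Tstep]
  simp [T]
  rw [← Finset.sum_add_distrib]
  apply Finset.sum_eq_zero
  intro ℓ _
  ring

lemma Trec1 (n : ℕ) : T (n+1) 1 = -2 * T n 0 := by
  rw [Tstep, T, T]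
  rw [← Finset.sum_add_distrib, Finset.mul_sum]
  apply Finset.sum_congr rfl
  intro ℓ _
  simp [Nat.choose_one_right]
  push_cast
  ring

lemma Trec2 (n m : ℕ) : T (n+1) (m+2) = -2 * T n (m+1) - T n m := by
  rw [Tstep, T, T, T]
  rw [← Finset.sum_add_distrib, Finset.mul_sum, ← Finset.sum_sub_distrib]
  apply Finset.sum_congr rfl
  intro ℓ _
  have : ((2*ℓ+3).choose (m+2) : ℚ)
      = ((2*ℓ+1).choose (m+2) : ℚ) + 2 * ((2*ℓ+1).choose (m+1) : ℚ) + ((2*ℓ+1).choose m : ℚ) := by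
    have e1 : (2*ℓ+3).choose (m+2) = (2*ℓ+2).choose (m+1) + (2*ℓ+2).choose (m+2) :=
      Nat.choose_succ_succ _ _
    have e2 : (2*ℓ+2).choose (m+1) = (2*ℓ+1).choose m + (2*ℓ+1).choose (m+1) :=
      Nat.choose_succ_succ _ _
    have e3 : (2*ℓ+2).choose (m+2) = (2*ℓ+1).choose (m+1) + (2*ℓ+1).choose (m+2) :=
      Nat.choose_succ_succ _ _
    rw [e1, e2, e3]
    push_cast
    ring
  rw [this]
  ring

lemma Frec2 (n m : ℕ) : F (n+1) (m+2) = -2 * F n (m+1) - F n m := by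
  unfold F
  rcases le_or_gt n m with h | h
  · obtain ⟨j, rfl⟩ := Nat.exists_eq_add_of_le h
    have e1 : n + j + 2 - (n + 1) = j + 1 := by omega
    have e2 : n + j + 2 - (n + 1) - 1 = j := by omega
    have e3 : n + j + 1 - n = j + 1 := by omega
    have e4 : n + j + 1 - n - 1 = j := by omega
    have e5 : n + j - n = j := by omega
    rw [e2, e1, e4, e3, e5]
    match j with
    | 0 =>
      simp only [Nat.choose_one_right, Nat.choose_zero_right]
      have c1 : ¬ (n + 1 ≤ n + 0) := by omega
      simp only [if_pos (by omega : n + 1 ≤ n + 0 + 2), if_pos (by omega : n + 2 ≤ n + 0 + 2),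
        if_pos (by omega : n ≤ n + 0 + 1), if_pos (by omega : n + 1 ≤ n + 0 + 1),
        if_pos (by omega : n ≤ n + 0), if_neg c1]
      push_cast
      rw [show n + 0 + 2 = (n + 1) + 1 by omega, show n + 0 + 1 = n + 1 by omega,
        show n + 0 = n by omega]
      rw [pow_succ (2:ℚ) (n+1), pow_succ (2:ℚ) n, pow_succ (4:ℚ) n]
      have h2 : (2:ℚ)^n ≠ 0 := by positivity
      simp only [Nat.choose_one_right]
      push_cast
      field_simp
      ring
    | (i+1) =>
      have e6 : n + (i + 1) - n - 1 = i := by omega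
      simp only [Nat.add_sub_cancel]
      simp only [if_pos (by omega : n + 1 ≤ n + (i+1) + 2), if_pos (by omega : n + 2 ≤ n + (i+1) + 2),
        if_pos (by omega : n ≤ n + (i+1) + 1), if_pos (by omega : n + 1 ≤ n + (i+1) + 1),
        if_pos (by omega : n ≤ n + (i+1)), if_pos (by omega : n + 1 ≤ n + (i+1))]
      have p1 : (n+1).choose (i+2) = n.choose (i+1) + n.choose (i+2) := Nat.choose_succ_succ' n (i+1)
      have p2 : (n+1).choose (i+1) = n.choose i + n.choose (i+1) := Nat.choose_succ_succ' n i
      rw [p1, p2]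
      push_cast
      rw [show n + (i+1) + 2 = (n + i + 2) + 1 by omega, show n + (i+1) + 1 = (n + i + 1) + 1 by omega,
        show n + (i+1) = (n + i) + 1 by omega]
      rw [pow_succ (2:ℚ) (n+i+2), pow_succ (2:ℚ) (n+i+1), pow_succ (2:ℚ) (n+i),
        pow_succ (4:ℚ) n]
      have h2 : (2:ℚ)^(n+i) ≠ 0 := by positivity
      field_simp
      ring
  · rcases eq_or_lt_of_le (Nat.succ_le_of_lt h) with h1 | h1
    · -- n = m + 1
      have e1 : m + 2 - (n + 1) = 0 := by omega
      have e2 : m + 1 - n = 0 := by omega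
      rw [e1, e2]
      simp only [Nat.choose_zero_right]
      have c1 : ¬ (n + 2 ≤ m + 2) := by omega
      have c2 : ¬ (n + 1 ≤ m + 1) := by omega
      have c3 : ¬ (n ≤ m) := by omega
      have c4 : ¬ (n + 1 ≤ m) := by omega
      simp only [if_pos (by omega : n + 1 ≤ m + 2), if_pos (by omega : n ≤ m + 1),
        if_neg c1, if_neg c2, if_neg c3, if_neg c4]
      push_cast
      rw [pow_succ (2:ℚ) (m+1), pow_succ (2:ℚ) m, pow_succ (4:ℚ) n]
      have h2 : (2:ℚ)^m ≠ 0 := by positivity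
      field_simp
      subst h1
      ring
    · -- m + 2 ≤ n
      have c1 : ¬ (n + 1 ≤ m + 2) := by omega
      have c2 : ¬ (n + 2 ≤ m + 2) := by omega
      have c3 : ¬ (n ≤ m + 1) := by omega
      have c4 : ¬ (n + 1 ≤ m + 1) := by omega
      have c5 : ¬ (n ≤ m) := by omega
      have c6 : ¬ (n + 1 ≤ m) := by omega
      simp only [if_neg c1, if_neg c2, if_neg c3, if_neg c4, if_neg c5, if_neg c6]
      ring

lemma TeqF : ∀ n m, T n m = F n m := by
  intro n
  induction n with
  | zero =>
    intro m
    match m with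
    | 0 => simp [T, F]
    | 1 => simp [T, F]
    | (m+2) => simp [T, F, Nat.choose_eq_zero_of_lt]
  | succ n ih =>
    intro m
    match m with
    | 0 =>
      rw [Trec0]
      simp [F]
    | 1 =>
      rw [Trec1, ih]
      rcases Nat.eq_zero_or_pos n with h | h
      · subst h; simp [F]; norm_num
      · have h1 : ¬ (n ≤ 0) := by omega
        have h2 : ¬ (n+1 ≤ 1) := by omega
        simp [F, h1, h2]
    | (m+2) =>
      rw [Trec2, ih, ih]
      exact (Frec2 n m).symm


lemma keyid (n i : ℕ) :
    ((n:ℚ)+1) * (n.choose (i+1) : ℚ) + 2*((n:ℚ)+1) * (n.choose i : ℚ)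
      = ((n:ℚ)+(i:ℚ)+2) * ((n+1).choose (i+1) : ℚ) := by
  have A : ((n:ℚ)+1) * (n.choose i : ℚ) = ((n+1).choose (i+1) : ℚ) * ((i:ℚ)+1) := by
    have := Nat.add_one_mul_choose_eq n i
    exact_mod_cast congrArg (Nat.cast : ℕ → ℚ) this
  have B : (((n+1).choose (i+1) : ℕ) : ℚ) = (n.choose i : ℚ) + (n.choose (i+1) : ℚ) := by
    exact_mod_cast congrArg (Nat.cast : ℕ → ℚ) (Nat.choose_succ_succ' n i)
  linear_combination A - ((n:ℚ)+1) * B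

/-- `D_r(k) = 4 ∑_{ℓ=⌊(k-1)/2⌋}^{r-1} (-1)^{ℓ+k} C(r-1,ℓ) C(2ℓ+1,k-1)`. -/
def Dcoef (r k : ℕ) : ℚ :=
  4 * ∑ ℓ ∈ Finset.Icc ((k - 1) / 2) (r - 1),
    (-1 : ℚ) ^ (ℓ + k) * ((r - 1).choose ℓ : ℚ) * ((2 * ℓ + 1).choose (k - 1) : ℚ)

lemma DT (n m : ℕ) : Dcoef (n+1) (m+1) = 4 * (-1:ℚ)^(m+1) * T n m := by
  rw [Dcoef, T]
  simp only [Nat.add_sub_cancel]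
  have hsub : Finset.Icc (m / 2) n ⊆ Finset.range (n+1) := by
    intro x hx
    simp only [Finset.mem_Icc] at hx
    simp only [Finset.mem_range]
    omega
  rw [Finset.sum_subset hsub]
  · rw [Finset.mul_sum, Finset.mul_sum]
    apply Finset.sum_congr rfl
    intro ℓ _
    rw [pow_add]
    ring
  · intro ℓ hℓ hℓ'
    simp only [Finset.mem_range] at hℓ
    simp only [Finset.mem_Icc] at hℓ'
    have : 2 * ℓ + 1 < m := by omega
    rw [Nat.choose_eq_zero_of_lt this]
    simp

theorem statement3 (r k : ℕ) (hr : 1 ≤ r) (hk1 : 1 ≤ k) (hk2 : k ≤ 2 * r) :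
    Dcoef r k =
      (if r ≤ k then (r.choose (k - r) : ℚ) else 0) * (2 * (k : ℚ) / (r : ℚ)) *
        (-1 : ℚ) ^ (k + r - 1) * 2 ^ (2 * r - k) ∧
    (k ≤ r - 1 → Dcoef r k = 0) := by
  obtain ⟨n, rfl⟩ : ∃ n, r = n + 1 := ⟨r-1, by omega⟩
  obtain ⟨m, rfl⟩ : ∃ m, k = m + 1 := ⟨k-1, by omega⟩
  have hm : m ≤ 2*n + 1 := by omega
  have hmain : Dcoef (n+1) (m+1) =
      (if n+1 ≤ m+1 then ((n+1).choose (m+1-(n+1)) : ℚ) else 0) *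
        (2 * ((m+1:ℕ):ℚ) / ((n+1:ℕ):ℚ)) * (-1:ℚ)^(m+1+(n+1)-1) * 2^(2*(n+1)-(m+1)) := by
    rw [DT, TeqF, F]
    by_cases hnm : n ≤ m
    · obtain ⟨j, rfl⟩ := Nat.exists_eq_add_of_le hnm
      have hj : j ≤ n + 1 := by omega
      have s1 : n + j + 1 - (n + 1) = j := by omega
      have s2 : n + j - n = j := by omega
      have s3 : (n + j + 1) + (n + 1) - 1 = (n + j + 1) + n := by omega
      have s4 : 2*(n+1) - (n+j+1) = n + 1 - j := by omega
      rw [s1, s2, s3, s4, if_pos (by omega : n ≤ n + j), if_pos (by omega : n+1 ≤ n+j+1),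
        pow_add ((-1:ℚ)) (n+j+1) n]
      have h4 : (4:ℚ)^n = 2^(2*n) := by
        rw [show (4:ℚ) = 2^2 by norm_num, ← pow_mul]
      have h5 : (2:ℚ)^(n+1-j) = 2^(2*n+1) / 2^(n+j) := by
        rw [eq_div_iff (pow_ne_zero _ (two_ne_zero)), ← pow_add]
        congr 1
        omega
      rw [h4, h5]
      match j with
      | 0 =>
        have c1 : ¬ (n + 1 ≤ n + 0) := by omega
        rw [if_neg c1]
        simp only [Nat.choose_zero_right, Nat.cast_one, Nat.add_zero]
        have h2 : (2:ℚ)^n ≠ 0 := by positivity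
        have h3 : ((n:ℚ)+1) ≠ 0 := by positivity
        push_cast
        rw [pow_succ (2:ℚ) (2*n)]
        field_simp
        ring
      | (i+1) =>
        rw [if_pos (by omega : n + 1 ≤ n + (i+1))]
        simp only [Nat.add_sub_cancel]
        have h2 : (2:ℚ)^(n+(i+1)) ≠ 0 := by positivity
        have h3 : ((n:ℚ)+1) ≠ 0 := by positivity
        have key := keyid n i
        push_cast
        rw [pow_succ (2:ℚ) (2*n)]
        field_simp
        ring_nf
        ring_nf at key
        linear_combination (4) * key
    · have c1 : ¬ (n + 1 ≤ m + 1) := by omega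
      have c2 : ¬ (n ≤ m) := by omega
      rw [if_neg c1, if_neg c2, if_neg (by omega : ¬ (n + 1 ≤ m))]
      push_cast
      ring
  refine ⟨hmain, fun hk => ?_⟩
  rw [hmain, if_neg (by omega : ¬ (n + 1 ≤ m + 1))]
  ring
end

section
/- For all integers r \ge 1 and 1 \le p \le 2r, the sum \widetilde{D}_{r,p} := \sum_{k=p}^{2r} \binom{k-1}{k-p} D_r(k) equals 0 if p is odd, and equals 4 \binom{r-1}{p/2 - 1} (-1)^{p/2 - 1} if p is even. -/
open Finset

/-- Alternating sum of binomials in ℚ. -/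
lemma alt_sum (n : ℕ) :
    ∑ j ∈ range (n + 1), (-1 : ℚ) ^ j * (n.choose j : ℚ) =
      if n = 0 then 1 else 0 := by
  have h := @Int.alternating_sum_range_choose n
  have h2 := congrArg (fun z : ℤ => (z : ℚ)) h
  simp only [Int.cast_sum, Int.cast_mul, Int.cast_pow, Int.cast_neg, Int.cast_one,
    Int.cast_natCast, Int.cast_ite, Int.cast_zero] at h2
  exact h2

/-- Key orthogonality identity. -/
lemma key (n m : ℕ) :
    ∑ j ∈ range (n + 1), (-1 : ℚ) ^ j * ((n.choose j : ℕ) : ℚ) * ((j.choose m : ℕ) : ℚ)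
      = if n = m then (-1 : ℚ) ^ m else 0 := by
  rcases lt_or_ge n m with h | h
  · rw [if_neg (show ¬ n = m by omega)]
    apply Finset.sum_eq_zero
    intro j hj
    rw [mem_range] at hj
    rw [Nat.choose_eq_zero_of_lt (show j < m by omega)]
    simp
  · -- m ≤ n
    have h1 : ∑ j ∈ range (n + 1),
        (-1 : ℚ) ^ j * ((n.choose j : ℕ) : ℚ) * ((j.choose m : ℕ) : ℚ)
        = ∑ j ∈ Icc m n,
        (-1 : ℚ) ^ j * ((n.choose j : ℕ) : ℚ) * ((j.choose m : ℕ) : ℚ) := by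
      rw [eq_comm]
      apply Finset.sum_subset
      · intro j hj; rw [mem_Icc] at hj; rw [mem_range]; omega
      · intro j hj hj2
        rw [mem_range] at hj; rw [mem_Icc] at hj2
        rw [Nat.choose_eq_zero_of_lt (show j < m by omega)]
        simp
    rw [h1]
    have h2 : ∀ j ∈ Icc m n,
        (-1 : ℚ) ^ j * ((n.choose j : ℕ) : ℚ) * ((j.choose m : ℕ) : ℚ)
        = (-1 : ℚ) ^ m * ((n.choose m : ℕ) : ℚ) *
            ((-1 : ℚ) ^ (j - m) * (((n - m).choose (j - m) : ℕ) : ℚ)) := by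
      intro j hj
      rw [mem_Icc] at hj
      have hnat := Nat.choose_mul (k := j) (n := n) (s := m) hj.1
      have hc : ((n.choose j : ℕ) : ℚ) * ((j.choose m : ℕ) : ℚ)
          = ((n.choose m : ℕ) : ℚ) * (((n - m).choose (j - m) : ℕ) : ℚ) := by
        exact_mod_cast congrArg (Nat.cast : ℕ → ℚ) hnat
      have hp : (-1 : ℚ) ^ j = (-1 : ℚ) ^ m * (-1 : ℚ) ^ (j - m) := by
        rw [← pow_add]; congr 1; omega
      calc (-1 : ℚ) ^ j * ((n.choose j : ℕ) : ℚ) * ((j.choose m : ℕ) : ℚ)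
          = (-1 : ℚ) ^ m * (-1 : ℚ) ^ (j - m) *
              (((n.choose j : ℕ) : ℚ) * ((j.choose m : ℕ) : ℚ)) := by rw [hp]; ring
        _ = (-1 : ℚ) ^ m * (-1 : ℚ) ^ (j - m) *
              (((n.choose m : ℕ) : ℚ) * (((n - m).choose (j - m) : ℕ) : ℚ)) := by rw [hc]
        _ = _ := by ring
    rw [Finset.sum_congr rfl h2, ← Finset.mul_sum]
    have h3 : ∑ j ∈ Icc m n, (-1 : ℚ) ^ (j - m) * (((n - m).choose (j - m) : ℕ) : ℚ)
        = ∑ i ∈ range (n - m + 1), (-1 : ℚ) ^ i * (((n - m).choose i : ℕ) : ℚ) := by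
      apply Finset.sum_nbij' (fun j => j - m) (fun i => i + m) <;> intro a ha <;>
        simp only [mem_Icc, mem_range] at ha ⊢ <;> try omega
    rw [h3, alt_sum]
    rcases eq_or_lt_of_le h with heq | hlt
    · subst heq; simp
    · rw [if_neg (show ¬ n - m = 0 by omega), if_neg (show ¬ n = m by omega)]; ring

theorem statement4 (r p : ℕ) (hr : 1 ≤ r) (hp1 : 1 ≤ p) (hp2 : p ≤ 2 * r) :
    ∑ k ∈ Finset.Icc p (2 * r), ((k - 1).choose (k - p) : ℚ) * Dcoef r k =
      if Odd p then 0
      else 4 * ((r - 1).choose (p / 2 - 1) : ℚ) * (-1 : ℚ) ^ (p / 2 - 1) := by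
  -- Step 1: rewrite each Dcoef with ℓ ranging over range r
  have step1 : ∀ k ∈ Icc p (2 * r),
      ((k - 1).choose (k - p) : ℚ) * Dcoef r k
      = ∑ ℓ ∈ range r, 4 * ((k - 1).choose (p - 1) : ℚ) *
          ((-1 : ℚ) ^ (ℓ + k) * ((r - 1).choose ℓ : ℚ) * ((2 * ℓ + 1).choose (k - 1) : ℚ)) := by
    intro k hk
    rw [mem_Icc] at hk
    have hchoose : (k - 1).choose (k - p) = (k - 1).choose (p - 1) := by
      have he : k - 1 - (p - 1) = k - p := by omega
      rw [← he, Nat.choose_symm (by omega)]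
    have hD : ∑ ℓ ∈ Finset.Icc ((k - 1) / 2) (r - 1),
        (-1 : ℚ) ^ (ℓ + k) * ((r - 1).choose ℓ : ℚ) * ((2 * ℓ + 1).choose (k - 1) : ℚ)
        = ∑ ℓ ∈ range r,
        (-1 : ℚ) ^ (ℓ + k) * ((r - 1).choose ℓ : ℚ) * ((2 * ℓ + 1).choose (k - 1) : ℚ) := by
      apply Finset.sum_subset
      · intro ℓ hℓ; rw [mem_Icc] at hℓ; rw [mem_range]; omega
      · intro ℓ hℓ hℓ2
        rw [mem_range] at hℓ; rw [mem_Icc] at hℓ2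
        rw [Nat.choose_eq_zero_of_lt (show 2 * ℓ + 1 < k - 1 by omega)]
        simp
    rw [hchoose, Dcoef, hD, Finset.mul_sum, Finset.mul_sum]
    apply Finset.sum_congr rfl
    intro ℓ _
    ring
  rw [Finset.sum_congr rfl step1, Finset.sum_comm]
  -- Step 2: compute each inner sum over k
  have step2 : ∀ ℓ ∈ range r,
      (∑ k ∈ Icc p (2 * r), 4 * ((k - 1).choose (p - 1) : ℚ) *
          ((-1 : ℚ) ^ (ℓ + k) * ((r - 1).choose ℓ : ℚ) * ((2 * ℓ + 1).choose (k - 1) : ℚ)))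
      = 4 * (-1 : ℚ) ^ (ℓ + 1) * ((r - 1).choose ℓ : ℚ) *
          (if 2 * ℓ + 1 = p - 1 then (-1 : ℚ) ^ (p - 1) else 0) := by
    intro ℓ hℓ
    rw [mem_range] at hℓ
    -- reindex k = j + 1
    have hre : (∑ k ∈ Icc p (2 * r), 4 * ((k - 1).choose (p - 1) : ℚ) *
          ((-1 : ℚ) ^ (ℓ + k) * ((r - 1).choose ℓ : ℚ) * ((2 * ℓ + 1).choose (k - 1) : ℚ)))
        = ∑ j ∈ Icc (p - 1) (2 * r - 1), 4 * ((j.choose (p - 1) : ℕ) : ℚ) *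
          ((-1 : ℚ) ^ (ℓ + (j + 1)) * ((r - 1).choose ℓ : ℚ) * ((2 * ℓ + 1).choose j : ℚ)) := by
      apply Finset.sum_nbij' (fun k => k - 1) (fun j => j + 1)
      all_goals intro a ha
      · rw [mem_Icc] at ha ⊢; omega
      · rw [mem_Icc] at ha ⊢; omega
      · rw [mem_Icc] at ha; omega
      · rfl
      · rw [mem_Icc] at ha
        have he : a - 1 + 1 = a := by omega
        rw [he]
    rw [hre]
    -- extend to range (2ℓ + 2) via range (2r)
    have hA : ∑ j ∈ Icc (p - 1) (2 * r - 1), 4 * ((j.choose (p - 1) : ℕ) : ℚ) *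
          ((-1 : ℚ) ^ (ℓ + (j + 1)) * ((r - 1).choose ℓ : ℚ) * ((2 * ℓ + 1).choose j : ℚ))
        = ∑ j ∈ range (2 * r), 4 * ((j.choose (p - 1) : ℕ) : ℚ) *
          ((-1 : ℚ) ^ (ℓ + (j + 1)) * ((r - 1).choose ℓ : ℚ) * ((2 * ℓ + 1).choose j : ℚ)) := by
      apply Finset.sum_subset
      · intro j hj; rw [mem_Icc] at hj; rw [mem_range]; omega
      · intro j hj hj2
        rw [mem_range] at hj; rw [mem_Icc] at hj2
        rw [Nat.choose_eq_zero_of_lt (show j < p - 1 by omega)]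
        simp
    have hB : ∑ j ∈ range (2 * ℓ + 1 + 1), 4 * ((j.choose (p - 1) : ℕ) : ℚ) *
          ((-1 : ℚ) ^ (ℓ + (j + 1)) * ((r - 1).choose ℓ : ℚ) * ((2 * ℓ + 1).choose j : ℚ))
        = ∑ j ∈ range (2 * r), 4 * ((j.choose (p - 1) : ℕ) : ℚ) *
          ((-1 : ℚ) ^ (ℓ + (j + 1)) * ((r - 1).choose ℓ : ℚ) * ((2 * ℓ + 1).choose j : ℚ)) := by
      apply Finset.sum_subset
      · intro j hj; rw [mem_range] at hj ⊢; omega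
      · intro j hj hj2
        rw [mem_range] at hj hj2
        rw [Nat.choose_eq_zero_of_lt (show 2 * ℓ + 1 < j by omega)]
        simp
    rw [hA, ← hB]
    have hterm : ∀ j ∈ range (2 * ℓ + 1 + 1),
        4 * ((j.choose (p - 1) : ℕ) : ℚ) *
          ((-1 : ℚ) ^ (ℓ + (j + 1)) * ((r - 1).choose ℓ : ℚ) * ((2 * ℓ + 1).choose j : ℚ))
        = (4 * (-1 : ℚ) ^ (ℓ + 1) * ((r - 1).choose ℓ : ℚ)) *
          ((-1 : ℚ) ^ j * (((2 * ℓ + 1).choose j : ℕ) : ℚ) * ((j.choose (p - 1) : ℕ) : ℚ)) := by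
      intro j _
      have hp : (-1 : ℚ) ^ (ℓ + (j + 1)) = (-1 : ℚ) ^ (ℓ + 1) * (-1 : ℚ) ^ j := by
        rw [← pow_add]; congr 1; omega
      rw [hp]; ring
    rw [Finset.sum_congr rfl hterm, ← Finset.mul_sum, key (2 * ℓ + 1) (p - 1)]
  rw [Finset.sum_congr rfl step2]
  -- Step 3: evaluate the remaining sum over ℓ
  rcases Nat.even_or_odd p with hpe | hpo
  · -- p even, p = 2s
    rw [if_neg (by simpa using hpe)]
    obtain ⟨s, hs⟩ := hpe
    have hs1 : 1 ≤ s := by omega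
    have hsr : s ≤ r := by omega
    have hps : p / 2 = s := by omega
    rw [Finset.sum_eq_single (s - 1)]
    · rw [if_pos (show 2 * (s - 1) + 1 = p - 1 by omega), hps]
      have h1 : (-1 : ℚ) ^ (s - 1 + 1) = (-1 : ℚ) ^ (s - 1) * (-1 : ℚ) := by
        rw [pow_succ]
      have h2 : (-1 : ℚ) ^ (p - 1) = -1 := by
        have he : p - 1 = 2 * (s - 1) + 1 := by omega
        rw [he, pow_succ, pow_mul]; norm_num
      rw [h1, h2]; ring
    · intro ℓ hℓ hne
      rw [if_neg (show ¬ 2 * ℓ + 1 = p - 1 by omega)]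
      ring
    · intro hmem
      exact absurd (mem_range.mpr (by omega)) hmem
  · rw [if_pos hpo]
    obtain ⟨t, ht⟩ := hpo
    apply Finset.sum_eq_zero
    intro ℓ _
    rw [if_neg (show ¬ 2 * ℓ + 1 = p - 1 by omega)]
    ring
end

section
/- For every integer r \ge 1 and every complex number x, \sum_{k=1}^{2r} D_r(k) \, x (1+x)^{k-1} = 4 x^2 (1-x^2)^{r-1}. -/
theorem statement5 (r : ℕ) (hr : 1 ≤ r) (x : ℂ) :
    ∑ k ∈ Finset.Icc 1 (2 * r), (Dcoef r k : ℂ) * x * (1 + x) ^ (k - 1) =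
      4 * x ^ 2 * (1 - x ^ 2) ^ (r - 1) := by
  have hD : ∀ k : ℕ, (Dcoef r k : ℂ) * x * (1 + x) ^ (k - 1)
      = ∑ ℓ ∈ Finset.range r,
          (4 * (-1 : ℂ) ^ (ℓ + k) * ((r - 1).choose ℓ : ℂ) * ((2 * ℓ + 1).choose (k - 1) : ℂ))
            * (x * (1 + x) ^ (k - 1)) := by
    intro k
    have hsub : Finset.Icc ((k - 1) / 2) (r - 1) ⊆ Finset.range r := by
      intro ℓ hl
      simp only [Finset.mem_Icc] at hl
      simp only [Finset.mem_range]
      omega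
    have hext : (∑ ℓ ∈ Finset.Icc ((k - 1) / 2) (r - 1),
        (-1 : ℚ) ^ (ℓ + k) * ((r - 1).choose ℓ : ℚ) * ((2 * ℓ + 1).choose (k - 1) : ℚ))
      = ∑ ℓ ∈ Finset.range r,
        (-1 : ℚ) ^ (ℓ + k) * ((r - 1).choose ℓ : ℚ) * ((2 * ℓ + 1).choose (k - 1) : ℚ) := by
      refine Finset.sum_subset hsub ?_
      intro ℓ hl hnl
      simp only [Finset.mem_range] at hl
      have h3 : ¬ ((k - 1) / 2 ≤ ℓ ∧ ℓ ≤ r - 1) := by simpa using hnl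
      have h2 : (2 * ℓ + 1).choose (k - 1) = 0 := by
        apply Nat.choose_eq_zero_of_lt
        omega
      simp [h2]
    unfold Dcoef
    rw [hext]
    push_cast
    rw [Finset.mul_sum, Finset.sum_mul, Finset.sum_mul]
    refine Finset.sum_congr rfl fun ℓ _ => by ring
  rw [Finset.sum_congr rfl fun k _ => hD k, Finset.sum_comm]
  have hinner : ∀ ℓ ∈ Finset.range r,
      (∑ k ∈ Finset.Icc 1 (2 * r),
        (4 * (-1 : ℂ) ^ (ℓ + k) * ((r - 1).choose ℓ : ℂ) * ((2 * ℓ + 1).choose (k - 1) : ℂ))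
          * (x * (1 + x) ^ (k - 1)))
      = 4 * x ^ 2 * ((-x ^ 2) ^ ℓ * 1 ^ (r - 1 - ℓ) * ((r - 1).choose ℓ : ℂ)) := by
    intro ℓ hl
    simp only [Finset.mem_range] at hl
    rw [← Finset.Ico_add_one_right_eq_Icc, Finset.sum_Ico_eq_sum_range]
    have h2r : 2 * r + 1 - 1 = 2 * r := by omega
    rw [h2r]
    have htr : (∑ j ∈ Finset.range (2 * r),
        (4 * (-1 : ℂ) ^ (ℓ + (1 + j)) * ((r - 1).choose ℓ : ℂ)
          * ((2 * ℓ + 1).choose (1 + j - 1) : ℂ)) * (x * (1 + x) ^ (1 + j - 1)))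
      = ∑ j ∈ Finset.range (2 * ℓ + 2),
        (4 * (-1 : ℂ) ^ (ℓ + (1 + j)) * ((r - 1).choose ℓ : ℂ)
          * ((2 * ℓ + 1).choose (1 + j - 1) : ℂ)) * (x * (1 + x) ^ (1 + j - 1)) := by
      refine (Finset.sum_subset (Finset.range_subset_range.mpr (by omega)) ?_).symm
      intro j hj hnj
      simp only [Finset.mem_range, not_lt] at hj hnj
      have h2 : (2 * ℓ + 1).choose (1 + j - 1) = 0 := by
        apply Nat.choose_eq_zero_of_lt
        omega
      rw [h2]
      simp
    rw [htr]
    have hbin := add_pow (-(1 + x)) (1 : ℂ) (2 * ℓ + 1)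
    have hsum : (∑ j ∈ Finset.range (2 * ℓ + 2),
        (4 * (-1 : ℂ) ^ (ℓ + (1 + j)) * ((r - 1).choose ℓ : ℂ)
          * ((2 * ℓ + 1).choose (1 + j - 1) : ℂ)) * (x * (1 + x) ^ (1 + j - 1)))
      = (4 * (-1 : ℂ) ^ (ℓ + 1) * ((r - 1).choose ℓ : ℂ) * x) *
          ∑ j ∈ Finset.range (2 * ℓ + 2),
            (-(1 + x)) ^ j * 1 ^ (2 * ℓ + 1 - j) * ((2 * ℓ + 1).choose j : ℂ) := by
      rw [Finset.mul_sum]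
      refine Finset.sum_congr rfl fun j _ => ?_
      have hj1 : 1 + j - 1 = j := by omega
      rw [hj1, show (-(1 + x) : ℂ) = (-1) * (1 + x) from by ring, mul_pow, one_pow,
        pow_add, pow_add]
      ring
    rw [hsum, ← hbin]
    have hx : (-(1 + x) + 1 : ℂ) = -x := by ring
    rw [hx]
    have : ((-x : ℂ)) ^ (2 * ℓ + 1) = -(x ^ (2 * ℓ + 1)) := by
      rw [neg_pow]
      simp [pow_succ, pow_mul]
    rw [this, show ((-x ^ 2 : ℂ)) ^ ℓ = (-1) ^ ℓ * x ^ (2 * ℓ) from by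
      rw [show (-x ^ 2 : ℂ) = (-1) * x ^ 2 from by ring, mul_pow, ← pow_mul], one_pow,
      pow_add, pow_add]
    ring
  rw [Finset.sum_congr rfl hinner, ← Finset.mul_sum]
  obtain ⟨n, rfl⟩ : ∃ n, r = n + 1 := ⟨r - 1, by omega⟩
  simp only [Nat.add_sub_cancel]
  rw [← add_pow]
  ring_nf
end

section
/- For all integers r \ge 1, 1 \le j \le 2r, and every complex number t, one has \alpha_{r,j}(t) = \sum_{k=j}^{2r} c_{k,j}\bigl(t + \tfrac{1}{2}\bigr) D_r(k) \, t^{2r-k}. -/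
/-- `c_{r,j}(z) = ∑_{l=0}^{j-1} C(j-1,l) (-1)^l (z-l-1)^{r-1}`. -/
noncomputable def ccoef (r j : ℕ) (z : ℂ) : ℂ :=
  ∑ l ∈ Finset.range j, ((j - 1).choose l : ℂ) * (-1 : ℂ) ^ l * (z - l - 1) ^ (r - 1)

/-- `α_{r,j}(t) = 4 ∑_{ℓ=⌊(j+1)/2⌋}^{r} C(r-1,ℓ-1) (-1)^{ℓ-1} c_{2ℓ,j}(1/2) t^{2r-2ℓ}`. -/
noncomputable def alphaCoef (r j : ℕ) (t : ℂ) : ℂ :=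
  4 * ∑ ℓ ∈ Finset.Icc ((j + 1) / 2) r,
    ((r - 1).choose (ℓ - 1) : ℂ) * (-1 : ℂ) ^ (ℓ - 1) * ccoef (2 * ℓ) j (1 / 2) *
      t ^ (2 * r - 2 * ℓ)

theorem altsum (i : ℕ) : ∀ n : ℕ, i < n →
    ∑ l ∈ Finset.range (n+1), (-1:ℂ)^l * (n.choose l : ℂ) * (l:ℂ)^i = 0 := by
  induction i using Nat.strong_induction_on with
  | _ i ih =>
    intro n hn
    match i with
    | 0 =>
      have h := add_pow (-1 : ℂ) 1 n
      rw [show ((-1:ℂ) + 1) = 0 by ring, zero_pow (by omega : n ≠ 0)] at h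
      rw [show (0:ℂ) = ∑ m ∈ Finset.range (n+1), (-1:ℂ)^m * 1^(n-m) * (n.choose m : ℂ) from h]
      exact Finset.sum_congr rfl (fun l _ => by simp)
    | i + 1 =>
      rw [Finset.sum_range_succ']
      simp only [Nat.cast_zero, zero_pow (Nat.succ_ne_zero i), mul_zero, add_zero]
      push_cast
      have key : ∀ l ∈ Finset.range n,
          (-1:ℂ)^(l+1) * ((n.choose (l+1)) : ℂ) * ((l:ℂ)+1)^(i+1)
          = ∑ m ∈ Finset.range (i+1),
              (-((n:ℂ) * (i.choose m : ℂ))) * ((-1:ℂ)^l * ((n-1).choose l : ℂ) * (l:ℂ)^m) := by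
        intro l hl
        have hnat : n * (n-1).choose l = n.choose (l+1) * (l+1) := by
          simpa [Nat.succ_eq_add_one, Nat.sub_add_cancel (show 1 ≤ n by omega)]
            using Nat.add_one_mul_choose_eq (n-1) l
        have hc : (n:ℂ) * ((n-1).choose l : ℂ) = (n.choose (l+1) : ℂ) * ((l:ℂ)+1) := by
          exact_mod_cast congrArg (Nat.cast : ℕ → ℂ) hnat
        have hb : ((l:ℂ)+1)^i = ∑ m ∈ Finset.range (i+1), (l:ℂ)^m * 1^(i-m) * (i.choose m : ℂ) :=
          add_pow (l:ℂ) 1 i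
        have hs : ∑ m ∈ Finset.range (i+1),
              (-((n:ℂ) * (i.choose m : ℂ))) * ((-1:ℂ)^l * ((n-1).choose l : ℂ) * (l:ℂ)^m)
            = (-(n:ℂ) * ((-1:ℂ)^l * ((n-1).choose l : ℂ))) *
              ∑ m ∈ Finset.range (i+1), (l:ℂ)^m * 1^(i-m) * (i.choose m : ℂ) := by
          rw [Finset.mul_sum]
          exact Finset.sum_congr rfl (fun m _ => by ring)
        rw [hs, ← hb]
        linear_combination ((-1:ℂ)^l * ((l:ℂ)+1)^i) * hc
      rw [Finset.sum_congr rfl key, Finset.sum_comm]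
      refine Finset.sum_eq_zero (fun m hm => ?_)
      rw [← Finset.mul_sum]
      have h0 : ∑ l ∈ Finset.range n, (-1:ℂ)^l * ((n-1).choose l : ℂ) * (l:ℂ)^m = 0 := by
        have hm' := Finset.mem_range.mp hm
        have := ih m hm' (n-1) (by omega)
        rwa [Nat.sub_add_cancel (by omega : 1 ≤ n)] at this
      rw [h0, mul_zero]

theorem van (n d : ℕ) (z : ℂ) (h : d < n) :
    ∑ l ∈ Finset.range (n+1), (n.choose l : ℂ) * (-1:ℂ)^l * (z - l)^d = 0 := by
  have key : ∀ l ∈ Finset.range (n+1),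
      (n.choose l : ℂ) * (-1:ℂ)^l * (z - l)^d
      = ∑ i ∈ Finset.range (d+1), (z^i * (-1:ℂ)^(i+d) * (d.choose i : ℂ)) *
          ((-1:ℂ)^l * (n.choose l : ℂ) * (l:ℂ)^(d-i)) := by
    intro l _
    rw [sub_pow, Finset.mul_sum]
    exact Finset.sum_congr rfl (fun i _ => by ring)
  rw [Finset.sum_congr rfl key, Finset.sum_comm]
  refine Finset.sum_eq_zero (fun i hi => ?_)
  rw [← Finset.mul_sum, altsum (d-i) n (by omega), mul_zero]

theorem ccoef_eq_zero (k j : ℕ) (z : ℂ) (hk : 1 ≤ k) (hkj : k < j) : ccoef k j z = 0 := by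
  unfold ccoef
  obtain ⟨n, rfl⟩ : ∃ n, j = n + 1 := ⟨j-1, by omega⟩
  simp only [Nat.add_sub_cancel]
  have hv := van n (k-1) (z-1) (by omega)
  rw [← hv]
  exact Finset.sum_congr rfl (fun l _ => by rw [show z - l - 1 = (z-1) - l from by ring])

theorem innerk (r ℓ : ℕ) (hℓ : ℓ < r) (u t : ℂ) :
    ∑ k ∈ Finset.Icc 1 (2*r),
      (-1:ℂ)^k * ((2*ℓ+1).choose (k-1) : ℂ) * (t - u)^(k-1) * t^(2*r-k)
    = -(u^(2*ℓ+1)) * t^(2*r-(2*ℓ+2)) := by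
  rw [← Finset.Ico_add_one_right_eq_Icc, Finset.sum_Ico_eq_sum_range]
  simp only [Nat.add_sub_cancel_left, Nat.succ_sub_one, Nat.add_sub_cancel]
  have hsub : Finset.range (2*ℓ+2) ⊆ Finset.range (2*r) := Finset.range_subset_range.mpr (by omega)
  have htrunc : ∑ m ∈ Finset.range (2*r),
        (-1:ℂ)^(1+m) * ((2*ℓ+1).choose m : ℂ) * (t - u)^m * t^(2*r-(1+m))
      = ∑ m ∈ Finset.range (2*ℓ+2),
        (-1:ℂ)^(1+m) * ((2*ℓ+1).choose m : ℂ) * (t - u)^m * t^(2*r-(1+m)) := by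
    refine (Finset.sum_subset hsub (fun m hm hm2 => ?_)).symm
    rw [Finset.mem_range] at hm hm2
    rw [Nat.choose_eq_zero_of_lt (by omega)]
    push_cast; ring
  rw [htrunc]
  have hterm : ∀ m ∈ Finset.range (2*ℓ+2),
      (-1:ℂ)^(1+m) * ((2*ℓ+1).choose m : ℂ) * (t - u)^m * t^(2*r-(1+m))
      = -(((-(t-u))^m * t^(2*ℓ+1-m) * ((2*ℓ+1).choose m : ℂ)) * t^(2*r-(2*ℓ+2))) := by
    intro m hm
    rw [Finset.mem_range] at hm
    rw [show ((-(t-u)):ℂ)^m = (-1:ℂ)^m * (t-u)^m from neg_pow _ _,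
      show t^(2*r-(1+m)) = t^(2*ℓ+1-m) * t^(2*r-(2*ℓ+2)) from by
        rw [← pow_add]; congr 1; omega]
    ring
  rw [Finset.sum_congr rfl hterm, Finset.sum_neg_distrib, ← Finset.sum_mul,
    ← add_pow (-(t-u)) t (2*ℓ+1), show -(t-u)+t = u from by ring]
  ring

theorem statement8 (r j : ℕ) (hr : 1 ≤ r) (hj1 : 1 ≤ j) (hj2 : j ≤ 2 * r) (t : ℂ) :
    alphaCoef r j t =
      ∑ k ∈ Finset.Icc j (2 * r), ccoef k j (t + 1 / 2) * (Dcoef r k : ℂ) * t ^ (2 * r - k) := by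
  set S : ℂ := ∑ l ∈ Finset.range j, ∑ ℓ ∈ Finset.range r,
      (4:ℂ) * ((j-1).choose l : ℂ) * (-1:ℂ)^l * ((r-1).choose ℓ : ℂ) * (-1:ℂ)^ℓ *
        (-((((l:ℂ)+1/2))^(2*ℓ+1)) * t^(2*r-(2*ℓ+2))) with hSdef
  have hRHS : ∑ k ∈ Finset.Icc j (2 * r), ccoef k j (t + 1 / 2) * (Dcoef r k : ℂ) * t ^ (2 * r - k)
      = S := by
    -- extend to Icc 1 (2r)
    have hext : ∑ k ∈ Finset.Icc j (2*r), ccoef k j (t + 1/2) * (Dcoef r k : ℂ) * t^(2*r-k)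
        = ∑ k ∈ Finset.Icc 1 (2*r), ccoef k j (t + 1/2) * (Dcoef r k : ℂ) * t^(2*r-k) := by
      refine Finset.sum_subset (Finset.Icc_subset_Icc hj1 le_rfl) (fun k hk hk2 => ?_)
      simp only [Finset.mem_Icc] at hk hk2
      rw [ccoef_eq_zero k j _ (by omega) (by omega), zero_mul, zero_mul]
    rw [hext]
    -- cast and extend Dcoef
    have hD : ∀ k : ℕ, 1 ≤ k → ((Dcoef r k : ℚ) : ℂ)
        = 4 * ∑ ℓ ∈ Finset.range r,
            (-1:ℂ)^(ℓ+k) * ((r-1).choose ℓ : ℂ) * ((2*ℓ+1).choose (k-1) : ℂ) := by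
      intro k hk
      have h1 : ((Dcoef r k : ℚ) : ℂ)
          = 4 * ∑ ℓ ∈ Finset.Icc ((k-1)/2) (r-1),
              (-1:ℂ)^(ℓ+k) * ((r-1).choose ℓ : ℂ) * ((2*ℓ+1).choose (k-1) : ℂ) := by
        simp only [Dcoef]
        push_cast
        ring
      rw [h1]
      congr 1
      rw [show Finset.range r = Finset.Icc 0 (r-1) from Finset.ext fun x => by
        simp only [Finset.mem_range, Finset.mem_Icc]; omega]
      refine Finset.sum_subset (Finset.Icc_subset_Icc (by omega) le_rfl) (fun ℓ hℓ hℓ2 => ?_)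
      simp only [Finset.mem_Icc] at hℓ hℓ2
      rw [Nat.choose_eq_zero_of_lt (show 2*ℓ+1 < k-1 by omega)]
      push_cast; ring
    -- triple sum
    have hstep : ∀ k ∈ Finset.Icc 1 (2*r),
        ccoef k j (t + 1/2) * (Dcoef r k : ℂ) * t^(2*r-k)
        = ∑ l ∈ Finset.range j, ∑ ℓ ∈ Finset.range r,
            ((4:ℂ) * ((j-1).choose l : ℂ) * (-1:ℂ)^l * ((r-1).choose ℓ : ℂ) * (-1:ℂ)^ℓ) *
              ((-1:ℂ)^k * ((2*ℓ+1).choose (k-1) : ℂ) * (t - ((l:ℂ)+1/2))^(k-1) * t^(2*r-k)) := by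
      intro k hk
      simp only [Finset.mem_Icc] at hk
      rw [hD k hk.1]
      simp only [ccoef]
      rw [Finset.mul_sum, Finset.sum_mul_sum, Finset.sum_mul]
      refine Finset.sum_congr rfl (fun l _ => ?_)
      rw [Finset.sum_mul]
      refine Finset.sum_congr rfl (fun ℓ _ => ?_)
      rw [show t + 1/2 - (l:ℂ) - 1 = t - ((l:ℂ)+1/2) from by ring]
      ring
    rw [Finset.sum_congr rfl hstep, Finset.sum_comm]
    refine Finset.sum_congr rfl (fun l _ => ?_)
    rw [Finset.sum_comm]
    refine Finset.sum_congr rfl (fun ℓ hℓ => ?_)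
    rw [← Finset.mul_sum, innerk r ℓ (Finset.mem_range.mp hℓ) ((l:ℂ)+1/2) t]
  have hLHS : alphaCoef r j t = S := by
    unfold alphaCoef
    have hext : ∑ ℓ ∈ Finset.Icc ((j+1)/2) r,
          ((r-1).choose (ℓ-1) : ℂ) * (-1:ℂ)^(ℓ-1) * ccoef (2*ℓ) j (1/2) * t^(2*r-2*ℓ)
        = ∑ ℓ ∈ Finset.Icc 1 r,
          ((r-1).choose (ℓ-1) : ℂ) * (-1:ℂ)^(ℓ-1) * ccoef (2*ℓ) j (1/2) * t^(2*r-2*ℓ) := by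
      refine Finset.sum_subset (Finset.Icc_subset_Icc (by omega) le_rfl) (fun ℓ hℓ hℓ2 => ?_)
      simp only [Finset.mem_Icc] at hℓ hℓ2
      rw [ccoef_eq_zero (2*ℓ) j _ (by omega) (by omega)]
      ring
    rw [hext, ← Finset.Ico_add_one_right_eq_Icc, Finset.sum_Ico_eq_sum_range]
    simp only [Nat.succ_sub_one, Nat.add_sub_cancel, Nat.add_sub_cancel_left]
    rw [Finset.mul_sum]
    have hstep : ∀ i ∈ Finset.range r,
        4 * (((r-1).choose i : ℂ) * (-1:ℂ)^i * ccoef (2*(1+i)) j (1/2) * t^(2*r-2*(1+i)))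
        = ∑ l ∈ Finset.range j,
            (4:ℂ) * ((j-1).choose l : ℂ) * (-1:ℂ)^l * ((r-1).choose i : ℂ) * (-1:ℂ)^i *
              (-((((l:ℂ)+1/2))^(2*i+1)) * t^(2*r-(2*i+2))) := by
      intro i hi
      simp only [ccoef]
      rw [show 2*(1+i) - 1 = 2*i+1 from by omega, show 2*r - 2*(1+i) = 2*r-(2*i+2) from by omega]
      rw [Finset.mul_sum, Finset.sum_mul, Finset.mul_sum]
      refine Finset.sum_congr rfl (fun l _ => ?_)
      rw [show (1:ℂ)/2 - (l:ℂ) - 1 = -(((l:ℂ)+1/2)) from by ring,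
        Odd.neg_pow (odd_two_mul_add_one i)]
      ring
    rw [Finset.sum_congr rfl hstep, Finset.sum_comm]
  rw [hLHS, hRHS]
end

section
/- For all integers r \ge 1, 1 \le k \le 2r, and every complex number t, one has \alpha_{r,k}(t) = (-1)^{k} \sum_{j=k}^{2r} \binom{j-1}{k-1} \alpha_{r,j}(t). -/
open Finset Polynomial fwdDiff

namespace Statement9Aux

/-- Iterated forward difference of the zero function is zero. -/
lemma fwdDiff_iter_zero {M G : Type*} [AddCommMonoid M] [AddCommGroup G] (h : M) (n : ℕ) :
    (Δ_[h])^[n] (fun _ ↦ (0 : G)) = fun _ ↦ 0 :=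
  Function.iterate_fixed (fwdDiff_const h (0 : G)) n

lemma fwdDiff_poly (P : ℂ[X]) :
    Δ_[(1:ℂ)] (fun z ↦ P.eval z) = fun z ↦ (P.comp (X + 1) - P).eval z := by
  funext z
  simp [fwdDiff, eval_comp]

lemma natDegree_comp_sub_le (P : ℂ[X]) :
    (P.comp (X + 1) - P).natDegree ≤ P.natDegree - 1 := by
  by_cases h0 : P.natDegree = 0
  · obtain ⟨c, rfl⟩ := Polynomial.natDegree_eq_zero.mp h0
    simp
  · have hP : P ≠ 0 := fun h ↦ h0 (by simp [h])
    have hq : (X + 1 : ℂ[X]).natDegree = 1 := by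
      simpa using Polynomial.natDegree_X_add_C (1 : ℂ)
    have hcompdeg : (P.comp (X + 1)).natDegree = P.natDegree := by
      rw [natDegree_comp, hq, mul_one]
    have hlc : (P.comp (X + 1)).leadingCoeff = P.leadingCoeff := by
      rw [leadingCoeff_comp (by rw [hq]; exact one_ne_zero)]
      have : (X + 1 : ℂ[X]).leadingCoeff = 1 := by
        simpa using Polynomial.leadingCoeff_X_add_C (1 : ℂ)
      rw [this, one_pow, mul_one]
    have hcomne : P.comp (X + 1) ≠ 0 := by
      intro h
      rw [h] at hcompdeg
      exact h0 (by simpa using hcompdeg.symm)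
    have hdeg : (P.comp (X + 1)).degree = P.degree := by
      rw [degree_eq_natDegree hcomne, degree_eq_natDegree hP, hcompdeg]
    have hlt := Polynomial.degree_sub_lt hdeg hcomne hlc
    by_cases hz : P.comp (X + 1) - P = 0
    · simp [hz]
    · have := Polynomial.natDegree_lt_natDegree hz (by rwa [hdeg] at hlt)
      omega

lemma fwdDiff_iter_poly_eq_zero :
    ∀ (D : ℕ) (P : ℂ[X]), P.natDegree ≤ D → ∀ n, D < n →
      (Δ_[(1:ℂ)])^[n] (fun z ↦ P.eval z) = fun _ ↦ 0 := by
  intro D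
  induction D with
  | zero =>
    intro P hP n hn
    obtain ⟨c, rfl⟩ := Polynomial.natDegree_eq_zero.mp (Nat.le_zero.mp hP)
    obtain ⟨m, rfl⟩ : ∃ m, n = m + 1 := ⟨n - 1, by omega⟩
    rw [Function.iterate_succ_apply]
    have hc : Δ_[(1:ℂ)] (fun z ↦ (C c).eval z) = fun _ ↦ (0 : ℂ) := by
      funext z; simp [fwdDiff]
    rw [hc, fwdDiff_iter_zero]
  | succ D ih =>
    intro P hP n hn
    obtain ⟨m, rfl⟩ : ∃ m, n = m + 1 := ⟨n - 1, by omega⟩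
    rw [Function.iterate_succ_apply, fwdDiff_poly]
    have hd := natDegree_comp_sub_le P
    exact ih _ (by omega) m (by omega)

/-- Newton expansion of a polynomial. -/
lemma newton (P : ℂ[X]) (M : ℕ) (hM : P.natDegree ≤ M) (z : ℂ) :
    P.eval z = ∑ m ∈ range (M + 1),
      (Δ_[(1:ℂ)])^[m] (fun w ↦ P.eval w) 0 * ((descPochhammer ℂ m).eval z / m.factorial) := by
  set Q : ℂ[X] := ∑ m ∈ range (M + 1),
      C ((Δ_[(1:ℂ)])^[m] (fun w ↦ P.eval w) 0 / m.factorial) * descPochhammer ℂ m with hQ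
  have key : P = Q := by
    apply eq_of_infinite_eval_eq
    apply Set.Infinite.mono ?_ (Set.infinite_range_of_injective (Nat.cast_injective (R := ℂ)))
    rintro x ⟨n, rfl⟩
    show P.eval (n : ℂ) = Q.eval (n : ℂ)
    have h0 : (0 : ℂ) + n • (1 : ℂ) = n := by simp
    have hL : P.eval (n : ℂ) = ∑ k ∈ range (n + 1),
        (n.choose k : ℂ) * (Δ_[(1:ℂ)])^[k] (fun w ↦ P.eval w) 0 := by
      have h := shift_eq_sum_fwdDiff_iter (1 : ℂ) (fun w ↦ P.eval w) n 0
      rw [h0] at h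
      rw [h]
      exact Finset.sum_congr rfl fun k _ ↦ by rw [nsmul_eq_mul]
    have hR : Q.eval (n : ℂ) = ∑ m ∈ range (M + 1),
        (n.choose m : ℂ) * (Δ_[(1:ℂ)])^[m] (fun w ↦ P.eval w) 0 := by
      rw [hQ, eval_finset_sum]
      apply Finset.sum_congr rfl
      intro m _
      rw [eval_mul, eval_C, descPochhammer_eval_eq_descFactorial,
        Nat.descFactorial_eq_factorial_mul_choose]
      have hfac : (m.factorial : ℂ) ≠ 0 := Nat.cast_ne_zero.mpr m.factorial_ne_zero
      push_cast
      field_simp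
    rw [hL, hR]
    have hext1 : ∑ k ∈ range (n + 1), (n.choose k : ℂ) * (Δ_[(1:ℂ)])^[k] (fun w ↦ P.eval w) 0
        = ∑ k ∈ range (max n M + 1), (n.choose k : ℂ) * (Δ_[(1:ℂ)])^[k] (fun w ↦ P.eval w) 0 := by
      apply Finset.sum_subset
      · intro x hx; simp only [mem_range] at *; omega
      · intro x hx hnx
        simp only [mem_range] at hx hnx
        have : n < x := by omega
        simp [Nat.choose_eq_zero_of_lt this]
    have hext2 : ∑ m ∈ range (M + 1), (n.choose m : ℂ) * (Δ_[(1:ℂ)])^[m] (fun w ↦ P.eval w) 0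
        = ∑ m ∈ range (max n M + 1), (n.choose m : ℂ) * (Δ_[(1:ℂ)])^[m] (fun w ↦ P.eval w) 0 := by
      apply Finset.sum_subset
      · intro x hx; simp only [mem_range] at *; omega
      · intro x hx hnx
        simp only [mem_range] at hx hnx
        have hx' : M < x := by omega
        rw [fwdDiff_iter_poly_eq_zero M P hM x hx', mul_zero]
    rw [hext1, hext2]
  conv_lhs => rw [key]
  rw [hQ, eval_finset_sum]
  apply Finset.sum_congr rfl
  intro m _
  rw [eval_mul, eval_C, div_mul_eq_mul_div, mul_div_assoc]

lemma desc_eval_neg (m i : ℕ) :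
    (descPochhammer ℂ m).eval (-1 - (i : ℂ)) = (-1) ^ m * ((m + i).descFactorial m : ℂ) := by
  induction m with
  | zero => simp
  | succ m ih =>
    rw [descPochhammer_succ_eval, ih]
    have h1 : m + 1 + i = (m + i) + 1 := by omega
    rw [h1, Nat.succ_descFactorial_succ]
    push_cast
    ring

lemma fwdDiff_iter_choose_shift (m : ℕ) : ∀ (n s : ℕ),
    (Δ_[1])^[n] (fun x : ℕ ↦ ((x + m).choose s : ℤ)) 0
      = if n ≤ s then (m.choose (s - n) : ℤ) else 0 := by
  intro n
  induction n with
  | zero => intro s; simp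
  | succ n ih =>
    intro s
    rw [Function.iterate_succ_apply]
    match s with
    | 0 =>
      have h1 : (fun x : ℕ ↦ ((x + m).choose 0 : ℤ)) = fun _ ↦ (1 : ℤ) := by
        funext x; simp
      rw [h1, fwdDiff_const, fwdDiff_iter_zero]
      simp
    | s + 1 =>
      have h1 : Δ_[1] (fun x : ℕ ↦ ((x + m).choose (s + 1) : ℤ))
          = fun x : ℕ ↦ ((x + m).choose s : ℤ) := by
        funext x
        show ((x + 1 + m).choose (s + 1) : ℤ) - ((x + m).choose (s + 1) : ℤ) = _
        have h2 : x + 1 + m = (x + m) + 1 := by omega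
        rw [h2, Nat.choose_succ_succ]
        push_cast
        ring
      rw [h1, ih]
      simp [Nat.succ_sub_succ]

lemma key_sum_int (n m : ℕ) :
    ∑ i ∈ range (n + 1), (-1 : ℤ) ^ (n - i) * (n.choose i : ℤ) * ((m + i).choose m : ℤ)
      = (m.choose n : ℤ) := by
  have h := fwdDiff_iter_eq_sum_shift (1 : ℕ) (fun x : ℕ ↦ ((x + m).choose m : ℤ)) n 0
  rw [fwdDiff_iter_choose_shift] at h
  have hR : ∑ k ∈ range (n + 1),
      ((-1 : ℤ) ^ (n - k) * (n.choose k : ℤ)) • ((0 + k • 1 + m).choose m : ℤ)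
      = ∑ i ∈ range (n + 1), (-1 : ℤ) ^ (n - i) * (n.choose i : ℤ) * ((m + i).choose m : ℤ) := by
    apply Finset.sum_congr rfl
    intro i _
    have : 0 + i • 1 + m = m + i := by simp [Nat.add_comm]
    rw [this, smul_eq_mul]
  rw [hR] at h
  rw [← h]
  by_cases hnm : n ≤ m
  · rw [if_pos hnm, Nat.choose_symm hnm]
  · rw [if_neg hnm, Nat.choose_eq_zero_of_lt (by omega)]
    simp

lemma key_sum (n m : ℕ) :
    ∑ i ∈ range (n + 1), (-1 : ℂ) ^ (n - i) * (n.choose i : ℂ) * ((m + i).choose m : ℂ)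
      = (m.choose n : ℂ) := by
  have h := key_sum_int n m
  have := congrArg (fun z : ℤ ↦ (z : ℂ)) h
  push_cast at this
  exact this

/-- The core identity for a single even degree `d`. -/
lemma core (d N k : ℕ) (hd : 1 ≤ d) (hde : Even d) (hk1 : 1 ≤ k) (hkN : k ≤ N) (hdN : d ≤ N) :
    ccoef d k (1 / 2) =
      (-1 : ℂ) ^ k * ∑ j ∈ Icc k N, ((j - 1).choose (k - 1) : ℂ) * ccoef d j (1 / 2) := by
  set P : ℂ[X] := (Polynomial.C (1 / 2 : ℂ) - X - 1) ^ (d - 1) with hP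
  set φ : ℂ → ℂ := fun z ↦ P.eval z with hφ
  have hφz : ∀ z : ℂ, φ z = (1 / 2 - z - 1) ^ (d - 1) := by
    intro z; simp [hφ, hP]
  set a : ℕ → ℂ := fun m ↦ (Δ_[(1:ℂ)])^[m] φ 0 with ha
  have hdeg : P.natDegree ≤ d - 1 := by
    rw [hP, natDegree_pow]
    have h1 : (Polynomial.C (1 / 2 : ℂ) - X - 1).natDegree ≤ 1 := by
      apply le_trans (natDegree_sub_le _ _)
      simp [natDegree_sub_le, le_trans (natDegree_sub_le _ _)]
    calc (d - 1) * (Polynomial.C (1 / 2 : ℂ) - X - 1).natDegree ≤ (d - 1) * 1 :=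
          Nat.mul_le_mul_left _ h1
      _ = d - 1 := by omega
  have hvan : ∀ m, d ≤ m → a m = 0 := by
    intro m hm
    have h := fwdDiff_iter_poly_eq_zero (d - 1) P hdeg m (by omega)
    rw [ha]
    show (Δ_[(1:ℂ)])^[m] φ 0 = 0
    rw [hφ, h]
  have hsum : ∀ n : ℕ, a n = ∑ i ∈ range (n + 1),
      (-1 : ℂ) ^ (n - i) * (n.choose i : ℂ) * φ i := by
    intro n
    rw [ha]
    show (Δ_[(1:ℂ)])^[n] φ 0 = _
    rw [fwdDiff_iter_eq_sum_shift]
    apply Finset.sum_congr rfl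
    intro i _
    have h0 : (0 : ℂ) + i • (1 : ℂ) = i := by simp
    rw [h0, zsmul_eq_mul]
    push_cast
    ring
  have hcc : ∀ m : ℕ, ccoef d (m + 1) (1 / 2) = (-1 : ℂ) ^ m * a m := by
    intro m
    rw [hsum m, Finset.mul_sum]
    unfold ccoef
    simp only [Nat.add_sub_cancel]
    apply Finset.sum_congr rfl
    intro l hl
    have hlm : l ≤ m := by
      simp only [mem_range] at hl; omega
    have hsign : (-1 : ℂ) ^ m * (-1 : ℂ) ^ (m - l) = (-1 : ℂ) ^ l := by
      rw [← pow_add]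
      have h2 : m + (m - l) = 2 * (m - l) + l := by omega
      rw [h2, pow_add, pow_mul]
      simp
    rw [hφz]
    linear_combination ((m.choose l : ℂ) * (1 / 2 - (l : ℂ) - 1) ^ (d - 1)) * hsign.symm
  have hanti : ∀ i : ℕ, φ (-1 - (i : ℂ)) = -φ i := by
    intro i
    rw [hφz, hφz]
    have hodd : Odd (d - 1) := Nat.Even.sub_odd hd hde odd_one
    have h1 : (1 / 2 - (-1 - (i : ℂ)) - 1) = ((i : ℂ) + 1 / 2) := by ring
    have h2 : (1 / 2 - (i : ℂ) - 1) = -((i : ℂ) + 1 / 2) := by ring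
    rw [h1, h2, hodd.neg_pow, neg_neg]
  -- main identity
  have hmain : ∀ n M : ℕ, n ≤ M → d - 1 ≤ M →
      ∑ m ∈ range (M + 1), (-1 : ℂ) ^ m * (m.choose n : ℂ) * a m = -a n := by
    intro n M hnM hdM
    have e1 : -a n = ∑ i ∈ range (n + 1),
        (-1 : ℂ) ^ (n - i) * (n.choose i : ℂ) * φ (-1 - (i : ℂ)) := by
      rw [hsum n, ← Finset.sum_neg_distrib]
      apply Finset.sum_congr rfl
      intro i _
      rw [hanti]
      ring
    have e2 : ∀ i : ℕ, φ (-1 - (i : ℂ)) = ∑ m ∈ range (M + 1),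
        a m * ((descPochhammer ℂ m).eval (-1 - (i : ℂ)) / m.factorial) := by
      intro i
      exact newton P M (le_trans hdeg hdM) _
    have e3 : ∀ m, m ∈ range (M + 1) →
        ∑ i ∈ range (n + 1), (-1 : ℂ) ^ (n - i) * (n.choose i : ℂ) *
          (a m * ((descPochhammer ℂ m).eval (-1 - (i : ℂ)) / m.factorial))
        = (-1 : ℂ) ^ m * (m.choose n : ℂ) * a m := by
      intro m _
      have hfac : (m.factorial : ℂ) ≠ 0 := Nat.cast_ne_zero.mpr m.factorial_ne_zero
      have step : ∀ i, i ∈ range (n + 1) →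
          (-1 : ℂ) ^ (n - i) * (n.choose i : ℂ) *
            (a m * ((descPochhammer ℂ m).eval (-1 - (i : ℂ)) / m.factorial))
          = (a m * (-1 : ℂ) ^ m) *
            ((-1 : ℂ) ^ (n - i) * (n.choose i : ℂ) * ((m + i).choose m : ℂ)) := by
        intro i _
        rw [desc_eval_neg, Nat.descFactorial_eq_factorial_mul_choose]
        push_cast
        field_simp
      rw [Finset.sum_congr rfl step, ← Finset.mul_sum, key_sum]
      ring
    have e4 : ∑ i ∈ range (n + 1), (-1 : ℂ) ^ (n - i) * (n.choose i : ℂ) * φ (-1 - (i : ℂ))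
        = ∑ m ∈ range (M + 1), (-1 : ℂ) ^ m * (m.choose n : ℂ) * a m := by
      have e5 : ∀ i, i ∈ range (n + 1) →
          (-1 : ℂ) ^ (n - i) * (n.choose i : ℂ) * φ (-1 - (i : ℂ))
          = ∑ m ∈ range (M + 1), (-1 : ℂ) ^ (n - i) * (n.choose i : ℂ) *
              (a m * ((descPochhammer ℂ m).eval (-1 - (i : ℂ)) / m.factorial)) := by
        intro i _
        rw [e2 i, Finset.mul_sum]
      rw [Finset.sum_congr rfl e5, Finset.sum_comm]
      exact Finset.sum_congr rfl e3
    rw [e1]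
    exact e4.symm
  -- assemble
  have hccj : ∀ j, j ∈ Icc k N → ((j - 1).choose (k - 1) : ℂ) * ccoef d j (1 / 2)
      = ((j - 1).choose (k - 1) : ℂ) * ((-1 : ℂ) ^ (j - 1) * a (j - 1)) := by
    intro j hj
    simp only [mem_Icc] at hj
    have hj1 : j = (j - 1) + 1 := by omega
    rw [hj1, Nat.add_sub_cancel, hcc]
  rw [Finset.sum_congr rfl hccj]
  have hidx : Icc k N = Finset.image (· + 1) (Icc (k - 1) (N - 1)) := by
    rw [Finset.image_add_right_Icc]
    congr 1 <;> omega
  rw [hidx, Finset.sum_image (fun x _ y _ h ↦ by omega)]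
  simp only [Nat.add_sub_cancel]
  have hext : ∑ m ∈ Icc (k - 1) (N - 1), ((m.choose (k - 1) : ℂ) * ((-1 : ℂ) ^ m * a m))
      = ∑ m ∈ range ((N - 1) + 1), ((m.choose (k - 1) : ℂ) * ((-1 : ℂ) ^ m * a m)) := by
    apply Finset.sum_subset
    · intro x hx
      simp only [mem_Icc, mem_range] at *
      omega
    · intro x hx hnx
      simp only [mem_Icc, mem_range] at hx hnx
      have : x < k - 1 := by omega
      simp [Nat.choose_eq_zero_of_lt this]
  rw [hext]
  have hform : ∑ m ∈ range ((N - 1) + 1), ((m.choose (k - 1) : ℂ) * ((-1 : ℂ) ^ m * a m))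
      = ∑ m ∈ range ((N - 1) + 1), (-1 : ℂ) ^ m * (m.choose (k - 1) : ℂ) * a m := by
    apply Finset.sum_congr rfl
    intro m _
    ring
  rw [hform, hmain (k - 1) (N - 1) (by omega) (by omega)]
  have hk : k = (k - 1) + 1 := by omega
  have hL : ccoef d k (1 / 2) = (-1 : ℂ) ^ (k - 1) * a (k - 1) := by
    conv_lhs => rw [hk]
    rw [hcc]
  have hsgn : (-1 : ℂ) ^ k = (-1 : ℂ) ^ (k - 1) * (-1) := by
    conv_lhs => rw [hk]
    rw [pow_succ]
  rw [hL, hsgn]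
  ring

/-- Extend the sum in `alphaCoef` to the full range `Icc 1 r`. -/
lemma alpha_full (r j : ℕ) (hj : 1 ≤ j) (t : ℂ) :
    alphaCoef r j t = 4 * ∑ ℓ ∈ Icc 1 r,
      ((r - 1).choose (ℓ - 1) : ℂ) * (-1 : ℂ) ^ (ℓ - 1) * ccoef (2 * ℓ) j (1 / 2) *
        t ^ (2 * r - 2 * ℓ) := by
  unfold alphaCoef
  congr 1
  apply Finset.sum_subset
  · intro x hx
    simp only [mem_Icc] at *
    omega
  · intro x hx hnx
    simp only [mem_Icc] at hx hnx
    have hx1 : 1 ≤ x := hx.1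
    have hxj : 2 * x + 1 ≤ j := by omega
    -- ccoef (2x) j (1/2) = 0
    have hz : ccoef (2 * x) j (1 / 2) = 0 := by
      have hj1 : j = (j - 1) + 1 := by omega
      -- use the machinery: ccoef d (m+1) = (-1)^m * Δ^[m] φ 0 which vanishes for m ≥ d
      set d := 2 * x with hdd
      set P : ℂ[X] := (Polynomial.C (1 / 2 : ℂ) - X - 1) ^ (d - 1) with hP
      have hdeg : P.natDegree ≤ d - 1 := by
        rw [hP, natDegree_pow]
        have h1 : (Polynomial.C (1 / 2 : ℂ) - X - 1).natDegree ≤ 1 := by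
          apply le_trans (natDegree_sub_le _ _)
          simp [natDegree_sub_le, le_trans (natDegree_sub_le _ _)]
        calc (d - 1) * (Polynomial.C (1 / 2 : ℂ) - X - 1).natDegree ≤ (d - 1) * 1 :=
              Nat.mul_le_mul_left _ h1
          _ = d - 1 := by omega
      have hvan := fwdDiff_iter_poly_eq_zero (d - 1) P hdeg (j - 1) (by omega)
      have hsum : (Δ_[(1:ℂ)])^[j - 1] (fun z ↦ P.eval z) 0 = ∑ i ∈ range ((j - 1) + 1),
          (-1 : ℂ) ^ ((j - 1) - i) * ((j - 1).choose i : ℂ) * (1 / 2 - (i : ℂ) - 1) ^ (d - 1) := by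
        rw [fwdDiff_iter_eq_sum_shift]
        apply Finset.sum_congr rfl
        intro i _
        have h0 : (0 : ℂ) + i • (1 : ℂ) = i := by simp
        rw [h0, zsmul_eq_mul]
        push_cast
        simp [hP]
      have hzero : ∑ i ∈ range ((j - 1) + 1),
          (-1 : ℂ) ^ ((j - 1) - i) * ((j - 1).choose i : ℂ) * (1 / 2 - (i : ℂ) - 1) ^ (d - 1)
            = 0 := by
        rw [← hsum, hvan]
      -- relate to ccoef
      unfold ccoef
      rw [hj1]
      have : ∀ l, l ∈ range ((j - 1) + 1) →
          (((j - 1) + 1 - 1).choose l : ℂ) * (-1 : ℂ) ^ l * ((1:ℂ) / 2 - l - 1) ^ (d - 1)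
          = (-1 : ℂ) ^ (j - 1) *
            ((-1 : ℂ) ^ ((j - 1) - l) * ((j - 1).choose l : ℂ) * (1 / 2 - (l : ℂ) - 1) ^ (d - 1)) := by
        intro l hl
        simp only [mem_range] at hl
        have hlm : l ≤ j - 1 := by omega
        have hsign : (-1 : ℂ) ^ (j - 1) * (-1 : ℂ) ^ ((j - 1) - l) = (-1 : ℂ) ^ l := by
          rw [← pow_add]
          have h2 : (j - 1) + ((j - 1) - l) = 2 * ((j - 1) - l) + l := by omega
          rw [h2, pow_add, pow_mul]
          simp
        simp only [Nat.add_sub_cancel]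
        linear_combination (((j - 1).choose l : ℂ) * ((1:ℂ) / 2 - (l : ℂ) - 1) ^ (d - 1)) * hsign.symm
      rw [Finset.sum_congr rfl this, ← Finset.mul_sum, hzero, mul_zero]
    rw [hz]
    ring

end Statement9Aux

theorem statement9 (r k : ℕ) (hr : 1 ≤ r) (hk1 : 1 ≤ k) (hk2 : k ≤ 2 * r) (t : ℂ) :
    alphaCoef r k t =
      (-1 : ℂ) ^ k * ∑ j ∈ Finset.Icc k (2 * r), ((j - 1).choose (k - 1) : ℂ) * alphaCoef r j t := by
  calc alphaCoef r k t
      = ∑ ℓ ∈ Finset.Icc 1 r, 4 * (((r - 1).choose (ℓ - 1) : ℂ) * (-1 : ℂ) ^ (ℓ - 1) *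
          ccoef (2 * ℓ) k (1 / 2) * t ^ (2 * r - 2 * ℓ)) := by
        rw [Statement9Aux.alpha_full r k hk1 t, Finset.mul_sum]
    _ = ∑ ℓ ∈ Finset.Icc 1 r, ∑ j ∈ Finset.Icc k (2 * r),
          (-1 : ℂ) ^ k * (((j - 1).choose (k - 1) : ℂ) *
            (4 * (((r - 1).choose (ℓ - 1) : ℂ) * (-1 : ℂ) ^ (ℓ - 1) *
              ccoef (2 * ℓ) j (1 / 2) * t ^ (2 * r - 2 * ℓ)))) := by
        apply Finset.sum_congr rfl
        intro ℓ hℓ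
        simp only [Finset.mem_Icc] at hℓ
        have hcore := Statement9Aux.core (2 * ℓ) (2 * r) k (by omega) (even_two_mul ℓ)
          hk1 hk2 (by omega)
        have hR : ∑ j ∈ Finset.Icc k (2 * r),
            (-1 : ℂ) ^ k * (((j - 1).choose (k - 1) : ℂ) *
              (4 * (((r - 1).choose (ℓ - 1) : ℂ) * (-1 : ℂ) ^ (ℓ - 1) *
                ccoef (2 * ℓ) j (1 / 2) * t ^ (2 * r - 2 * ℓ))))
            = ((-1 : ℂ) ^ k * (4 * (((r - 1).choose (ℓ - 1) : ℂ) * (-1 : ℂ) ^ (ℓ - 1) *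
                t ^ (2 * r - 2 * ℓ)))) *
              ∑ j ∈ Finset.Icc k (2 * r),
                ((j - 1).choose (k - 1) : ℂ) * ccoef (2 * ℓ) j (1 / 2) := by
          rw [Finset.mul_sum]
          apply Finset.sum_congr rfl
          intro j _
          ring
        rw [hR]
        rw [eq_comm] at hcore
        -- hcore : (-1)^k * ∑ ... = ccoef (2ℓ) k (1/2)
        calc 4 * (((r - 1).choose (ℓ - 1) : ℂ) * (-1 : ℂ) ^ (ℓ - 1) *
                ccoef (2 * ℓ) k (1 / 2) * t ^ (2 * r - 2 * ℓ))
            = 4 * (((r - 1).choose (ℓ - 1) : ℂ) * (-1 : ℂ) ^ (ℓ - 1) *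
                ((-1 : ℂ) ^ k * ∑ j ∈ Finset.Icc k (2 * r),
                  ((j - 1).choose (k - 1) : ℂ) * ccoef (2 * ℓ) j (1 / 2)) *
                t ^ (2 * r - 2 * ℓ)) := by rw [hcore]
          _ = _ := by ring
    _ = ∑ j ∈ Finset.Icc k (2 * r), ∑ ℓ ∈ Finset.Icc 1 r,
          (-1 : ℂ) ^ k * (((j - 1).choose (k - 1) : ℂ) *
            (4 * (((r - 1).choose (ℓ - 1) : ℂ) * (-1 : ℂ) ^ (ℓ - 1) *
              ccoef (2 * ℓ) j (1 / 2) * t ^ (2 * r - 2 * ℓ)))) := Finset.sum_comm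
    _ = (-1 : ℂ) ^ k * ∑ j ∈ Finset.Icc k (2 * r),
          ((j - 1).choose (k - 1) : ℂ) * alphaCoef r j t := by
        rw [Finset.mul_sum]
        apply Finset.sum_congr rfl
        intro j hj
        simp only [Finset.mem_Icc] at hj
        rw [Statement9Aux.alpha_full r j (by omega) t]
        simp only [Finset.mul_sum]
end

section
/- For every integer r \ge 1 and all complex numbers T and t, one has \sum_{k=1}^{2r} \alpha_{r,k}(t) \binom{T+k-1}{k-1} = 4\bigl(T+\tfrac{1}{2}\bigr)\Bigl(t^2 - \bigl(T+\tfrac{1}{2}\bigr)^2\Bigr)^{r-1}, where \binom{T+k-1}{k-1} := \frac{(T+1)(T+2)\cdots(T+k-1)}{(k-1)!}. -/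
/-- The generalized binomial coefficient `binom(T+n, n) = ∏_{i=1}^{n} (T+i) / n!`. -/
noncomputable def gbinom (T : ℂ) (n : ℕ) : ℂ :=
  (∏ i ∈ Finset.range n, (T + i + 1)) / (n.factorial : ℂ)

/-- The `m`-th finite difference of `x ^ n` at a point: `Dsum m n w = Δ^m (x^n)` evaluated
appropriately. -/
noncomputable def Dsum (m n : ℕ) (w : ℂ) : ℂ :=
  ∑ l ∈ Finset.range (m + 1), (m.choose l : ℂ) * (-1 : ℂ) ^ l * (w - l) ^ n

lemma ccoef_succ_eq_Dsum (n j : ℕ) (z : ℂ) :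
    ccoef (n + 1) (j + 1) z = Dsum j n (z - 1) := by
  unfold ccoef Dsum
  simp only [Nat.add_sub_cancel]
  refine Finset.sum_congr rfl fun l _ => ?_
  ring_nf

lemma Dsum_rec (m n : ℕ) (w : ℂ) :
    Dsum (m + 1) n w = Dsum m n w - Dsum m n (w - 1) := by
  unfold Dsum
  rw [Finset.sum_range_succ' (fun l => ((m+1).choose l : ℂ) * (-1:ℂ)^l * (w - l)^n)]
  have key : ∀ l, (((m+1).choose (l+1) : ℕ) : ℂ) = (m.choose l : ℂ) + (m.choose (l+1) : ℂ) := by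
    intro l
    rw [Nat.choose_succ_succ']
    push_cast
    ring
  simp only [key]
  have expand : ∀ l ∈ Finset.range (m + 1),
      ((m.choose l : ℂ) + (m.choose (l+1) : ℂ)) * (-1:ℂ)^(l+1) * (w - ↑(l+1))^n
        = (m.choose (l+1) : ℂ) * (-1:ℂ)^(l+1) * (w - ↑(l+1))^n
          - (m.choose l : ℂ) * (-1:ℂ)^l * ((w - 1) - l)^n := by
    intro l _
    have : (w : ℂ) - ↑(l+1) = (w - 1) - l := by push_cast; ring
    rw [this]
    ring
  rw [Finset.sum_congr rfl expand, Finset.sum_sub_distrib]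
  have first : (∑ l ∈ Finset.range (m+1),
        (m.choose (l+1) : ℂ) * (-1:ℂ)^(l+1) * (w - ↑(l+1))^n)
      + (m.choose 0 : ℂ) * (-1:ℂ)^0 * (w - (0:ℕ))^n
      = ∑ l ∈ Finset.range (m+2), (m.choose l : ℂ) * (-1:ℂ)^l * (w - l)^n := by
    rw [Finset.sum_range_succ' (fun l => (m.choose l : ℂ) * (-1:ℂ)^l * (w - l)^n)]
  have second : ∑ l ∈ Finset.range (m+2), (m.choose l : ℂ) * (-1:ℂ)^l * (w - l)^n
      = ∑ l ∈ Finset.range (m+1), (m.choose l : ℂ) * (-1:ℂ)^l * (w - l)^n := by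
    rw [Finset.sum_range_succ]
    simp [Nat.choose_succ_self]
  have c0 : (((m+1).choose 0 : ℕ) : ℂ) = ((m.choose 0 : ℕ) : ℂ) := by simp
  rw [c0, sub_add_eq_add_sub, first, second]

lemma Dsum_diff (m n : ℕ) (w : ℂ) :
    Dsum m n w - Dsum m n (w - 1) = ∑ i ∈ Finset.range n, (n.choose i : ℂ) * Dsum m i (w - 1) := by
  unfold Dsum
  rw [← Finset.sum_sub_distrib]
  have expand : ∀ l ∈ Finset.range (m + 1),
      (m.choose l : ℂ) * (-1:ℂ)^l * (w - l)^n - (m.choose l : ℂ) * (-1:ℂ)^l * ((w-1) - l)^n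
        = ∑ i ∈ Finset.range n, (n.choose i : ℂ) * ((m.choose l : ℂ) * (-1:ℂ)^l * ((w-1) - l)^i) := by
    intro l _
    have hb : (w : ℂ) - l = ((w - 1) - l) + 1 := by ring
    have hpow : (w - (l:ℂ))^n = ∑ i ∈ Finset.range (n+1), ((w-1) - l)^i * (n.choose i : ℂ) := by
      rw [hb, add_pow]
      simp
    rw [hpow, Finset.sum_range_succ, Nat.choose_self, Nat.cast_one, mul_one, mul_add,
      add_sub_cancel_right, Finset.mul_sum]
    exact Finset.sum_congr rfl fun i _ => by ring
  rw [Finset.sum_congr rfl expand, Finset.sum_comm]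
  refine Finset.sum_congr rfl fun i _ => ?_
  rw [Finset.mul_sum]

lemma Dsum_eq_zero : ∀ m n, n < m → ∀ w : ℂ, Dsum m n w = 0 := by
  intro m
  induction m with
  | zero => intro n hn; omega
  | succ m ih =>
    intro n hn w
    rw [Dsum_rec, Dsum_diff]
    apply Finset.sum_eq_zero
    intro i hi
    rw [Finset.mem_range] at hi
    rw [ih i (by omega) (w - 1), mul_zero]

lemma choose_mul_complex (m l : ℕ) :
    ((m : ℂ) - l) * (m.choose l : ℂ) = (m : ℂ) * ((m - 1).choose l : ℂ) := by
  rcases Nat.lt_or_ge m l with h | h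
  · rw [Nat.choose_eq_zero_of_lt h, Nat.choose_eq_zero_of_lt (by omega)]
    simp
  · rcases Nat.eq_zero_or_pos m with rfl | hm
    · interval_cases l; simp
    · have h1 : m.choose (l + 1) * (l + 1) = m.choose l * (m - l) := Nat.choose_succ_right_eq m l
      have h2 : m * (m - 1).choose l = m.choose (l + 1) * (l + 1) := by
        have := Nat.add_one_mul_choose_eq (m - 1) l
        rw [Nat.sub_add_cancel hm] at this
        exact this
      have h3 : m.choose l * (m - l) = m * (m - 1).choose l := by omega
      have := congrArg (fun x : ℕ => (x : ℂ)) h3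
      push_cast [Nat.cast_sub h] at this
      linear_combination this

lemma Dsum_mul_rec (m n : ℕ) (w : ℂ) :
    Dsum m (n + 1) w = (w - m) * Dsum m n w + (m : ℂ) * Dsum (m - 1) n w := by
  rcases Nat.eq_zero_or_pos m with rfl | hm
  · unfold Dsum; simp [pow_succ]; ring
  · unfold Dsum
    have expand : ∀ l ∈ Finset.range (m + 1),
        (m.choose l : ℂ) * (-1:ℂ)^l * (w - l)^(n+1)
          = (w - m) * ((m.choose l : ℂ) * (-1:ℂ)^l * (w - l)^n)
            + (m : ℂ) * (((m-1).choose l : ℂ) * (-1:ℂ)^l * (w - l)^n) := by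
      intro l _
      have key := choose_mul_complex m l
      calc (m.choose l : ℂ) * (-1:ℂ)^l * (w - l)^(n+1)
          = (w - m) * ((m.choose l : ℂ) * (-1:ℂ)^l * (w - l)^n)
            + (((m:ℂ) - l) * (m.choose l : ℂ)) * ((-1:ℂ)^l * (w - l)^n) := by ring
        _ = _ := by rw [key]; ring
    rw [Finset.sum_congr rfl expand, Finset.sum_add_distrib, ← Finset.mul_sum, ← Finset.mul_sum]
    congr 1
    congr 1
    have : m - 1 + 1 = m := Nat.sub_add_cancel hm
    rw [show m + 1 = (m - 1 + 1) + 1 by omega]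
    rw [Finset.sum_range_succ]
    simp [Nat.choose_eq_zero_of_lt (show m - 1 < m - 1 + 1 by omega)]

lemma gbinom_zero (T : ℂ) : gbinom T 0 = 1 := by simp [gbinom]

lemma gbinom_succ (T : ℂ) (m : ℕ) :
    (T + m + 1) * gbinom T m = ((m : ℂ) + 1) * gbinom T (m + 1) := by
  unfold gbinom
  rw [Finset.prod_range_succ]
  have h1 : ((m+1).factorial : ℂ) = ((m:ℂ) + 1) * (m.factorial : ℂ) := by
    rw [Nat.factorial_succ]; push_cast; ring
  rw [h1]
  have hf : (m.factorial : ℂ) ≠ 0 := Nat.cast_ne_zero.2 (Nat.factorial_ne_zero m)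
  have hm : ((m:ℂ) + 1) ≠ 0 := by exact_mod_cast Nat.succ_ne_zero m
  field_simp

/-- Newton interpolation formula for monomials (range form). -/
lemma newton_range : ∀ n N, n < N → ∀ w T : ℂ,
    ∑ j ∈ Finset.range N, Dsum j n w * gbinom T j = (T + w + 1) ^ n := by
  intro n
  induction n with
  | zero =>
    intro N hN w T
    rw [Finset.sum_eq_single 0]
    · simp [Dsum, gbinom]
    · intro j _ hj
      rw [Dsum_eq_zero j 0 (Nat.pos_of_ne_zero hj) w, zero_mul]
    · intro h; exact absurd (Finset.mem_range.2 hN) h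
  | succ n ih =>
    intro N hN w T
    obtain ⟨M, rfl⟩ : ∃ M, N = M + 1 := ⟨N - 1, by omega⟩
    have hnM : n < M := by omega
    have expand : ∀ j ∈ Finset.range (M + 1),
        Dsum j (n+1) w * gbinom T j
          = (w - j) * Dsum j n w * gbinom T j + (j : ℂ) * Dsum (j-1) n w * gbinom T j := by
      intro j _
      rw [Dsum_mul_rec]; ring
    rw [Finset.sum_congr rfl expand, Finset.sum_add_distrib]
    -- second sum: peel off j = 0 and reindex
    have second : ∑ j ∈ Finset.range (M + 1), (j : ℂ) * Dsum (j-1) n w * gbinom T j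
        = ∑ i ∈ Finset.range M, (T + i + 1) * (Dsum i n w * gbinom T i) := by
      rw [Finset.sum_range_succ' (fun j => (j : ℂ) * Dsum (j-1) n w * gbinom T j)]
      simp only [Nat.cast_zero, zero_mul, add_zero, Nat.add_sub_cancel]
      refine Finset.sum_congr rfl fun i _ => ?_
      have : ((i:ℂ) + 1) * Dsum i n w * gbinom T (i+1)
          = Dsum i n w * (((i:ℂ) + 1) * gbinom T (i+1)) := by ring
      push_cast
      rw [this, ← gbinom_succ]
      ring
    rw [second]
    -- first sum: last term vanishes
    have first : ∑ j ∈ Finset.range (M + 1), (w - j) * Dsum j n w * gbinom T j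
        = ∑ j ∈ Finset.range M, (w - j) * (Dsum j n w * gbinom T j) := by
      rw [Finset.sum_range_succ, Dsum_eq_zero M n hnM w]
      rw [mul_zero, zero_mul, add_zero]
      exact Finset.sum_congr rfl fun j _ => by ring
    rw [first, ← Finset.sum_add_distrib]
    have combine : ∀ j ∈ Finset.range M,
        (w - j) * (Dsum j n w * gbinom T j) + (T + j + 1) * (Dsum j n w * gbinom T j)
          = (T + w + 1) * (Dsum j n w * gbinom T j) := by
      intro j _; ring
    rw [Finset.sum_congr rfl combine, ← Finset.mul_sum]
    have sumM : ∑ j ∈ Finset.range M, Dsum j n w * gbinom T j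
        = ∑ j ∈ Finset.range (M+1), Dsum j n w * gbinom T j := by
      rw [Finset.sum_range_succ, Dsum_eq_zero M n hnM w, zero_mul, add_zero]
    rw [sumM, ih (M+1) (by omega) w T, pow_succ]
    ring

/-- Newton interpolation formula in the `Icc`/`ccoef` form. -/
lemma newton (n N : ℕ) (h : n < N) (z T : ℂ) :
    ∑ k ∈ Finset.Icc 1 N, ccoef (n + 1) k z * gbinom T (k - 1) = (T + z) ^ n := by
  have : Finset.Icc 1 N = Finset.Ico 1 (N + 1) := by
    rw [Finset.Ico_add_one_right_eq_Icc]
  rw [this, Finset.sum_Ico_eq_sum_range]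
  simp only [Nat.add_sub_cancel]
  have : ∀ j ∈ Finset.range N,
      ccoef (n + 1) (1 + j) z * gbinom T (1 + j - 1) = Dsum j n (z - 1) * gbinom T j := by
    intro j _
    rw [show 1 + j = j + 1 by omega, Nat.add_sub_cancel, ccoef_succ_eq_Dsum]
  rw [Finset.sum_congr rfl this, newton_range n N h (z-1) T]
  ring_nf

theorem statement10 (r : ℕ) (hr : 1 ≤ r) (T t : ℂ) :
    ∑ k ∈ Finset.Icc 1 (2 * r), alphaCoef r k t * gbinom T (k - 1) =
      4 * (T + 1 / 2) * (t ^ 2 - (T + 1 / 2) ^ 2) ^ (r - 1) := by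
  -- Step 1: extend the inner sum's lower bound to 1
  have step1 : ∀ k ∈ Finset.Icc 1 (2 * r), alphaCoef r k t
      = 4 * ∑ ℓ ∈ Finset.Icc 1 r,
          ((r - 1).choose (ℓ - 1) : ℂ) * (-1 : ℂ) ^ (ℓ - 1) * ccoef (2 * ℓ) k (1 / 2) *
            t ^ (2 * r - 2 * ℓ) := by
    intro k hk
    rw [Finset.mem_Icc] at hk
    unfold alphaCoef
    congr 1
    apply Finset.sum_subset
    · intro x hx
      rw [Finset.mem_Icc] at hx ⊢
      omega
    · intro x hx hx2
      rw [Finset.mem_Icc] at hx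
      rw [Finset.mem_Icc, not_and_or, not_le, not_le] at hx2
      have hxlt : x < (k + 1) / 2 := by omega
      have h2x : 2 * x ≤ k - 1 := by omega
      obtain ⟨j, rfl⟩ : ∃ j, k = j + 1 := ⟨k - 1, by omega⟩
      have hx1 : 1 ≤ x := hx.1
      have : ccoef (2 * x) (j + 1) (1/2) = 0 := by
        rw [show 2 * x = (2 * x - 1) + 1 by omega, ccoef_succ_eq_Dsum]
        exact Dsum_eq_zero j (2*x-1) (by omega) _
      rw [this]
      ring
  have e1 : ∑ k ∈ Finset.Icc 1 (2 * r), alphaCoef r k t * gbinom T (k - 1)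
      = ∑ k ∈ Finset.Icc 1 (2 * r),
          (4 * ∑ ℓ ∈ Finset.Icc 1 r,
            ((r - 1).choose (ℓ - 1) : ℂ) * (-1 : ℂ) ^ (ℓ - 1) * ccoef (2 * ℓ) k (1 / 2) *
              t ^ (2 * r - 2 * ℓ)) * gbinom T (k - 1) :=
    Finset.sum_congr rfl fun k hk => by rw [step1 k hk]
  rw [e1]
  -- Step 2: swap the sums
  have pull : ∀ k ∈ Finset.Icc 1 (2 * r),
      (4 * ∑ ℓ ∈ Finset.Icc 1 r,
          ((r - 1).choose (ℓ - 1) : ℂ) * (-1 : ℂ) ^ (ℓ - 1) * ccoef (2 * ℓ) k (1 / 2) *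
            t ^ (2 * r - 2 * ℓ)) * gbinom T (k - 1)
      = ∑ ℓ ∈ Finset.Icc 1 r,
          4 * (((r - 1).choose (ℓ - 1) : ℂ) * (-1 : ℂ) ^ (ℓ - 1) * t ^ (2 * r - 2 * ℓ))
            * (ccoef (2 * ℓ) k (1 / 2) * gbinom T (k - 1)) := by
    intro k _
    rw [mul_assoc, Finset.sum_mul, Finset.mul_sum]
    refine Finset.sum_congr rfl fun ℓ _ => ?_
    ring
  rw [Finset.sum_congr rfl pull, Finset.sum_comm]
  -- Step 3: apply Newton's formula to the inner sum
  have step3 : ∀ ℓ ∈ Finset.Icc 1 r,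
      ∑ k ∈ Finset.Icc 1 (2 * r),
          4 * (((r - 1).choose (ℓ - 1) : ℂ) * (-1 : ℂ) ^ (ℓ - 1) * t ^ (2 * r - 2 * ℓ))
            * (ccoef (2 * ℓ) k (1 / 2) * gbinom T (k - 1))
      = 4 * (((r - 1).choose (ℓ - 1) : ℂ) * (-1 : ℂ) ^ (ℓ - 1) * t ^ (2 * r - 2 * ℓ))
          * (T + 1/2) ^ (2 * ℓ - 1) := by
    intro ℓ hℓ
    rw [Finset.mem_Icc] at hℓ
    rw [← Finset.mul_sum]
    congr 1
    have h2ℓ : 2 * ℓ = (2 * ℓ - 1) + 1 := by omega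
    rw [show (fun k => ccoef (2 * ℓ) k (1/2) * gbinom T (k-1))
        = (fun k => ccoef ((2 * ℓ - 1) + 1) k (1/2) * gbinom T (k-1)) by rw [← h2ℓ]]
    exact newton (2 * ℓ - 1) (2 * r) (by omega) (1/2) T
  rw [Finset.sum_congr rfl step3]
  -- Step 4: the binomial theorem
  have : Finset.Icc 1 r = Finset.Ico 1 (r + 1) := by rw [Finset.Ico_add_one_right_eq_Icc]
  rw [this, Finset.sum_Ico_eq_sum_range]
  simp only [Nat.add_sub_cancel]
  have reindex : ∀ i ∈ Finset.range r,
      4 * (((r - 1).choose (1 + i - 1) : ℂ) * (-1 : ℂ) ^ (1 + i - 1) * t ^ (2 * r - 2 * (1 + i)))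
          * (T + 1/2) ^ (2 * (1 + i) - 1)
      = 4 * (T + 1/2) *
          ((-1:ℂ)^i * ((T + 1/2)^2) ^ i * (t^2) ^ (r - 1 - i) * ((r-1).choose i : ℂ)) := by
    intro i hi
    rw [Finset.mem_range] at hi
    have e1 : 1 + i - 1 = i := by omega
    have e2 : 2 * r - 2 * (1 + i) = 2 * (r - 1 - i) := by omega
    have e3 : 2 * (1 + i) - 1 = 2 * i + 1 := by omega
    rw [e1, e2, e3, pow_mul t 2, pow_add ((T:ℂ) + 1/2) (2*i) 1, pow_mul ((T:ℂ) + 1/2) 2 i]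
    ring
  rw [Finset.sum_congr rfl reindex, ← Finset.mul_sum]
  congr 1
  -- now: ∑ i ∈ range r, (-1)^i ((T+1/2)^2)^i (t^2)^(r-1-i) C(r-1,i) = (t^2-(T+1/2)^2)^(r-1)
  obtain ⟨s, rfl⟩ : ∃ s, r = s + 1 := ⟨r - 1, by omega⟩
  simp only [Nat.add_sub_cancel]
  rw [show t^2 - (T + 1/2)^2 = -((T + 1/2)^2 - t^2) by ring, neg_pow, sub_pow]
  rw [Finset.mul_sum]
  refine Finset.sum_congr rfl fun i hi => ?_
  rw [Finset.mem_range] at hi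
  have : (-1:ℂ)^s * ((-1:ℂ)^(i+s) * ((T+1/2)^2)^i * (t^2)^(s-i) * ((s.choose i : ℕ):ℂ))
      = ((-1:ℂ)^s * (-1:ℂ)^s) * (-1:ℂ)^i * ((T+1/2)^2)^i * (t^2)^(s-i) * ((s.choose i : ℕ):ℂ) := by
    rw [pow_add]; ring
  rw [this, ← pow_add, ← two_mul, pow_mul, neg_one_sq, one_pow]
  ring
end

section
/- For all integers r \ge 1 and 1 \le m \le 2r, and every complex number t, one has \sum_{l=2r-m}^{2r-1} \binom{l}{2r-m} \hat{\alpha}_{r,l}(t) = (-1)^{m} \alpha_{r,m}(t). -/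
/-- `α̂_{r,l}(t) = (-1)^l ∑_{j=1}^{2r-l} C(2r-j,l) α_{r,j}(t)`. -/
noncomputable def alphaHat (r l : ℕ) (t : ℂ) : ℂ :=
  (-1 : ℂ) ^ l * ∑ j ∈ Finset.Icc 1 (2 * r - l), ((2 * r - j).choose l : ℂ) * alphaCoef r j t

lemma alt_sum_choose (n : ℕ) :
    ∑ i ∈ Finset.range (n + 1), (-1 : ℂ) ^ i * (n.choose i : ℂ) = if n = 0 then 1 else 0 := by
  cases n with
  | zero => simp
  | succ n =>
    have h := add_pow (-1 : ℂ) 1 (n + 1)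
    simp only [one_pow, mul_one, neg_add_cancel] at h
    rw [← h, zero_pow (Nat.succ_ne_zero n), if_neg (Nat.succ_ne_zero n)]

lemma key_inversion (a b N : ℕ) (hb : b ≤ N) :
    ∑ l ∈ Finset.Icc a N, (-1 : ℂ) ^ l * (b.choose l : ℂ) * (l.choose a : ℂ)
      = if a = b then (-1 : ℂ) ^ a else 0 := by
  rcases lt_or_ge b a with hba | hab
  · rw [if_neg (by omega)]
    refine Finset.sum_eq_zero fun l hl => ?_
    rw [Finset.mem_Icc] at hl
    rw [Nat.choose_eq_zero_of_lt (by omega)]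
    simp
  · -- restrict to Icc a b
    have hsub : Finset.Icc a b ⊆ Finset.Icc a N := Finset.Icc_subset_Icc_right hb
    rw [← Finset.sum_subset hsub (fun l hl hl' => by
      rw [Finset.mem_Icc] at hl; rw [Finset.mem_Icc] at hl'
      rw [Nat.choose_eq_zero_of_lt (by omega)]; simp)]
    have hreidx : ∀ f : ℕ → ℂ, ∑ l ∈ Finset.Icc a b, f l
        = ∑ i ∈ Finset.range (b - a + 1), f (a + i) := by
      intro f
      rw [← Finset.Ico_add_one_right_eq_Icc, Finset.sum_Ico_eq_sum_range]
      have he : b + 1 - a = b - a + 1 := by omega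
      rw [he]
    rw [hreidx]
    have hterm : ∀ i ∈ Finset.range (b - a + 1),
        (-1 : ℂ) ^ (a + i) * (b.choose (a + i) : ℂ) * ((a + i).choose a : ℂ)
          = (-1 : ℂ) ^ a * (b.choose a : ℂ) * ((-1 : ℂ) ^ i * ((b - a).choose i : ℂ)) := by
      intro i hi
      rw [Finset.mem_range] at hi
      have h1 : b.choose (a + i) * (a + i).choose a = b.choose a * (b - a).choose i := by
        have := Nat.choose_mul (n := b) (k := a + i) (s := a) (by omega)
        simpa using this
      have h1' : (b.choose (a + i) : ℂ) * ((a + i).choose a : ℂ)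
          = (b.choose a : ℂ) * ((b - a).choose i : ℂ) := by
        exact_mod_cast congrArg (Nat.cast : ℕ → ℂ) h1
      rw [pow_add]
      linear_combination ((-1 : ℂ) ^ a * (-1 : ℂ) ^ i) * h1'
    rw [Finset.sum_congr rfl hterm, ← Finset.mul_sum, alt_sum_choose]
    rcases eq_or_lt_of_le hab with h | h
    · subst h; simp
    · rw [if_neg (by omega), if_neg (by omega)]
      simp

theorem statement11 (r m : ℕ) (hr : 1 ≤ r) (hm1 : 1 ≤ m) (hm2 : m ≤ 2 * r) (t : ℂ) :
    ∑ l ∈ Finset.Icc (2 * r - m) (2 * r - 1), (l.choose (2 * r - m) : ℂ) * alphaHat r l t =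
      (-1 : ℂ) ^ m * alphaCoef r m t := by
  set n := 2 * r with hn
  -- expand alphaHat and extend inner sum range to Icc 1 n
  have hstep1 : ∀ l ∈ Finset.Icc (n - m) (n - 1),
      (l.choose (n - m) : ℂ) * alphaHat r l t
        = ∑ j ∈ Finset.Icc 1 n,
            ((-1 : ℂ) ^ l * ((n - j).choose l : ℂ) * (l.choose (n - m) : ℂ)) * alphaCoef r j t := by
    intro l hl
    rw [Finset.mem_Icc] at hl
    unfold alphaHat
    rw [← hn]
    have hsub : Finset.Icc 1 (n - l) ⊆ Finset.Icc 1 n :=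
      Finset.Icc_subset_Icc_right (by omega)
    rw [← Finset.sum_subset hsub (fun j hj hj' => by
      rw [Finset.mem_Icc] at hj; rw [Finset.mem_Icc] at hj'
      rw [Nat.choose_eq_zero_of_lt (by omega)]; simp)]
    rw [Finset.mul_sum, Finset.mul_sum]
    refine Finset.sum_congr rfl fun j hj => ?_
    ring
  rw [Finset.sum_congr rfl hstep1, Finset.sum_comm]
  have hstep2 : ∀ j ∈ Finset.Icc 1 n,
      ∑ l ∈ Finset.Icc (n - m) (n - 1),
          ((-1 : ℂ) ^ l * ((n - j).choose l : ℂ) * (l.choose (n - m) : ℂ)) * alphaCoef r j t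
        = (if (n - m) = (n - j) then (-1 : ℂ) ^ (n - m) else 0) * alphaCoef r j t := by
    intro j hj
    rw [Finset.mem_Icc] at hj
    rw [← Finset.sum_mul, key_inversion (n - m) (n - j) (n - 1) (by omega)]
  rw [Finset.sum_congr rfl hstep2]
  rw [Finset.sum_eq_single m]
  · rw [if_pos rfl]
    congr 1
    have hsq : (-1 : ℂ) ^ m * (-1 : ℂ) ^ m = 1 := by
      rw [← pow_add, ← two_mul, pow_mul]; norm_num
    have h1 : n - m + m = 2 * r := by omega
    have h2 : (-1 : ℂ) ^ (n - m) * (-1 : ℂ) ^ m = 1 := by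
      rw [← pow_add, h1, pow_mul]; norm_num
    calc (-1 : ℂ) ^ (n - m) = (-1 : ℂ) ^ (n - m) * ((-1 : ℂ) ^ m * (-1 : ℂ) ^ m) := by
          rw [hsq, mul_one]
      _ = ((-1 : ℂ) ^ (n - m) * (-1 : ℂ) ^ m) * (-1 : ℂ) ^ m := by ring
      _ = (-1 : ℂ) ^ m := by rw [h2, one_mul]
  · intro j hj hjm
    rw [Finset.mem_Icc] at hj
    rw [if_neg (by omega)]
    simp
  · intro h
    exact absurd (Finset.mem_Icc.mpr ⟨hm1, hm2⟩) h
end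

section
/- Let m \ge 1 be an odd integer and let t be a real number with 0 < t < 1/2. Define J_{m,1}(w) := -t^{-2w} \sin(\pi w) \int_{0}^{t} \bigl(1 - \tfrac{\xi^2}{t^2}\bigr)^{-w} \xi^{m} \tan(\pi \xi)\, d\xi for complex w. Then J_{m,1} is (complex) differentiable at w = 0, J_{m,1}(0) = 0, and its derivative at w = 0 equals -\int_{0}^{t} \pi \xi^{m} \tan(\pi \xi)\, d\xi. -/
open Real MeasureTheory Filter Set Topology

set_option maxHeartbeats 1000000 in
theorem statement15 (m : ℕ) (hm : Odd m) (hm1 : 1 ≤ m) (t : ℝ) (ht0 : 0 < t)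
    (ht1 : t < 1 / 2) :
    (fun w : ℂ => -((t : ℂ) ^ (-(2 * w))) * Complex.sin (π * w) *
        ∫ ξ in (0 : ℝ)..t,
          ((1 - ξ ^ 2 / t ^ 2 : ℝ) : ℂ) ^ (-w) * (ξ : ℂ) ^ m * (Real.tan (π * ξ) : ℂ)) 0 = 0 ∧
    HasDerivAt
      (fun w : ℂ => -((t : ℂ) ^ (-(2 * w))) * Complex.sin (π * w) *
        ∫ ξ in (0 : ℝ)..t,
          ((1 - ξ ^ 2 / t ^ 2 : ℝ) : ℂ) ^ (-w) * (ξ : ℂ) ^ m * (Real.tan (π * ξ) : ℂ))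
      (-((∫ ξ in (0 : ℝ)..t, π * ξ ^ m * Real.tan (π * ξ) : ℝ) : ℂ)) 0 := by
  have htne : (t : ℂ) ≠ 0 := Complex.ofReal_ne_zero.mpr ht0.ne'
  set I : ℂ → ℂ := fun w => ∫ ξ in (0 : ℝ)..t,
      ((1 - ξ ^ 2 / t ^ 2 : ℝ) : ℂ) ^ (-w) * (ξ : ℂ) ^ m * (Real.tan (π * ξ) : ℂ) with hIdef
  set g : ℂ → ℂ := fun w => -((t : ℂ) ^ (-(2 * w))) * Complex.sin (π * w) with hgdef
  have hg0 : g 0 = 0 := by simp [hgdef]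
  -- value of I at 0
  have hI0 : I 0 = ((∫ ξ in (0 : ℝ)..t, ξ ^ m * Real.tan (π * ξ) : ℝ) : ℂ) := by
    rw [hIdef]
    simp only [neg_zero, Complex.cpow_zero, one_mul]
    rw [← intervalIntegral.integral_ofReal]
    apply intervalIntegral.integral_congr
    intro x _
    push_cast
    ring
  have hae : ∀ᵐ x : ℝ ∂volume, x ≠ t := by
    rw [ae_iff]
    simp only [not_not]
    have : {x : ℝ | x = t} = {t} := rfl
    rw [this]
    exact measure_singleton t
  -- continuity of I at 0 along the punctured neighbourhood
  have hIcont : Tendsto I (𝓝[≠] (0 : ℂ)) (𝓝 (I 0)) := by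
    have hmeas : ∀ w : ℂ, AEStronglyMeasurable
        (fun ξ : ℝ => ((1 - ξ ^ 2 / t ^ 2 : ℝ) : ℂ) ^ (-w) * (ξ : ℂ) ^ m *
          (Real.tan (π * ξ) : ℂ)) (volume.restrict (Set.uIoc (0 : ℝ) t)) := by
      intro w
      rw [uIoc_of_le ht0.le, ← Measure.restrict_congr_set Ioo_ae_eq_Ioc]
      apply ContinuousOn.aestronglyMeasurable _ measurableSet_Ioo
      intro x hx
      have hb : (0 : ℝ) < 1 - x ^ 2 / t ^ 2 := by
        have hx2 : x ^ 2 < t ^ 2 := by nlinarith [hx.1, hx.2]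
        have : x ^ 2 / t ^ 2 < 1 := (div_lt_one (by positivity)).mpr hx2
        linarith
      apply ContinuousWithinAt.mul
      apply ContinuousWithinAt.mul
      · have h1 : ContinuousAt (fun z : ℂ => z ^ (-w))
            (((1 - x ^ 2 / t ^ 2 : ℝ) : ℂ)) :=
          continuousAt_cpow_const (Complex.ofReal_mem_slitPlane.mpr hb)
        have h2 : ContinuousAt (fun ξ : ℝ => ((1 - ξ ^ 2 / t ^ 2 : ℝ) : ℂ)) x := by
          fun_prop
        have h3 : ContinuousAt (fun ξ : ℝ => ((1 - ξ ^ 2 / t ^ 2 : ℝ) : ℂ) ^ (-w)) x :=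
          ContinuousAt.comp (f := fun ξ : ℝ => ((1 - ξ ^ 2 / t ^ 2 : ℝ) : ℂ)) h1 h2
        exact h3.continuousWithinAt
      · exact (Complex.continuous_ofReal.pow m).continuousWithinAt
      · have hc : Real.cos (π * x) ≠ 0 := by
          apply (Real.cos_pos_of_mem_Ioo ?_).ne'
          constructor
          · nlinarith [hx.1, Real.pi_pos]
          · nlinarith [hx.2, Real.pi_pos]
        have h3 : ContinuousAt (fun ξ : ℝ => Real.tan (π * ξ)) x := by
          have h4 := Real.continuousAt_tan.mpr hc
          exact h4.comp (by fun_prop)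
        exact (Complex.continuous_ofReal.continuousAt.comp h3).continuousWithinAt
    apply intervalIntegral.tendsto_integral_filter_of_dominated_convergence
      (bound := fun x => t ^ ((1 : ℝ) / 2) * (t ^ m * Real.tan (π * t)) *
        (t - x) ^ (-(1 / 2 : ℝ)))
    · exact Eventually.of_forall hmeas
    · -- the uniform bound for w near 0
      have hsmall : ∀ᶠ w : ℂ in 𝓝[≠] (0 : ℂ), ‖w‖ ≤ 1 / 2 := by
        apply nhdsWithin_le_nhds
        have h5 := Metric.closedBall_mem_nhds (0 : ℂ) (by norm_num : (0:ℝ) < 1/2)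
        filter_upwards [h5] with w hw
        simpa [Complex.dist_eq] using hw
      filter_upwards [hsmall] with w hw
      filter_upwards [hae] with x hxt hx
      rw [uIoc_of_le ht0.le] at hx
      have hx0 : 0 < x := hx.1
      have hxt' : x < t := lt_of_le_of_ne hx.2 hxt
      have hb : (0 : ℝ) < 1 - x ^ 2 / t ^ 2 := by
        have hx2 : x ^ 2 < t ^ 2 := by nlinarith
        have : x ^ 2 / t ^ 2 < 1 := (div_lt_one (by positivity)).mpr hx2
        linarith
      have hb1 : 1 - x ^ 2 / t ^ 2 ≤ 1 := by
        have : 0 ≤ x ^ 2 / t ^ 2 := by positivity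
        linarith
      have hwre : (-w).re ≥ -(1/2 : ℝ) := by
        have h6 : |w.re| ≤ 1/2 := le_trans (Complex.abs_re_le_norm w) hw
        have := abs_le.mp h6
        simp only [Complex.neg_re]
        linarith [this.2]
      -- norm computation
      have hnorm : ‖((1 - x ^ 2 / t ^ 2 : ℝ) : ℂ) ^ (-w) * (x : ℂ) ^ m *
          (Real.tan (π * x) : ℂ)‖
          = (1 - x ^ 2 / t ^ 2) ^ ((-w).re) * (x ^ m * Real.tan (π * x)) := by
        rw [norm_mul, norm_mul,
          Complex.norm_cpow_eq_rpow_re_of_pos hb]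
        rw [norm_pow, Complex.norm_real, Real.norm_eq_abs, abs_of_pos hx0,
          Complex.norm_real, Real.norm_eq_abs]
        rw [abs_of_nonneg (Real.tan_nonneg_of_nonneg_of_le_pi_div_two (by positivity)
          (by nlinarith [Real.pi_pos]))]
        ring
      rw [hnorm]
      have hstep1 : (1 - x ^ 2 / t ^ 2) ^ ((-w).re) ≤
          (1 - x ^ 2 / t ^ 2) ^ (-(1/2 : ℝ)) :=
        Real.rpow_le_rpow_of_exponent_ge hb hb1 hwre
      have hkey : (t - x) / t ≤ 1 - x ^ 2 / t ^ 2 := by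
        rw [← sub_nonneg]
        have heq : 1 - x ^ 2 / t ^ 2 - (t - x) / t = x * (t - x) / t ^ 2 := by
          field_simp
          ring
        rw [heq]
        apply div_nonneg (mul_nonneg hx0.le (by linarith)) (by positivity)
      have hstep2 : (1 - x ^ 2 / t ^ 2) ^ (-(1/2 : ℝ)) ≤
          ((t - x) / t) ^ (-(1/2 : ℝ)) :=
        Real.rpow_le_rpow_of_nonpos (div_pos (by linarith) ht0) hkey (by norm_num)
      have hstep3 : ((t - x) / t) ^ (-(1/2 : ℝ)) =
          t ^ ((1:ℝ)/2) * (t - x) ^ (-(1/2 : ℝ)) := by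
        rw [Real.div_rpow (by linarith) ht0.le, Real.rpow_neg ht0.le (1/2),
          div_inv_eq_mul]
        ring
      have hA : (1 - x ^ 2 / t ^ 2) ^ ((-w).re) ≤
          t ^ ((1:ℝ)/2) * (t - x) ^ (-(1/2 : ℝ)) := by
        calc (1 - x ^ 2 / t ^ 2) ^ ((-w).re)
            ≤ (1 - x ^ 2 / t ^ 2) ^ (-(1/2 : ℝ)) := hstep1
          _ ≤ ((t - x) / t) ^ (-(1/2 : ℝ)) := hstep2
          _ = t ^ ((1:ℝ)/2) * (t - x) ^ (-(1/2 : ℝ)) := hstep3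
      have hB : x ^ m * Real.tan (π * x) ≤ t ^ m * Real.tan (π * t) := by
        have htanx : 0 ≤ Real.tan (π * x) :=
          Real.tan_nonneg_of_nonneg_of_le_pi_div_two (by positivity)
            (by nlinarith [Real.pi_pos])
        have htanmono : Real.tan (π * x) ≤ Real.tan (π * t) :=
          (Real.tan_lt_tan_of_nonneg_of_lt_pi_div_two (by positivity)
            (by nlinarith [Real.pi_pos]) (by nlinarith [Real.pi_pos])).le
        have hxm : x ^ m ≤ t ^ m := pow_le_pow_left₀ hx0.le hxt'.le m
        exact mul_le_mul hxm htanmono htanx (by positivity)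
      calc (1 - x ^ 2 / t ^ 2) ^ ((-w).re) * (x ^ m * Real.tan (π * x))
          ≤ (t ^ ((1:ℝ)/2) * (t - x) ^ (-(1/2 : ℝ))) * (t ^ m * Real.tan (π * t)) := by
            apply mul_le_mul hA hB
            · have htanx : 0 ≤ Real.tan (π * x) :=
                Real.tan_nonneg_of_nonneg_of_le_pi_div_two (by positivity)
                  (by nlinarith [Real.pi_pos])
              positivity
            · have h7 : (0:ℝ) ≤ (t - x) ^ (-(1/2 : ℝ)) :=
                Real.rpow_nonneg (by linarith) _
              positivity
        _ = t ^ ((1:ℝ)/2) * (t ^ m * Real.tan (π * t)) * (t - x) ^ (-(1/2 : ℝ)) := by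
            ring
    · -- integrability of the bound
      have h1 : IntervalIntegrable (fun x : ℝ => x ^ (-(1/2 : ℝ))) volume 0 t :=
        intervalIntegral.intervalIntegrable_rpow' (by norm_num)
      have h2 := (h1.comp_sub_left t).symm
      simp only [sub_zero, sub_self] at h2
      simpa [mul_assoc] using h2.const_mul (t ^ ((1:ℝ)/2) * (t ^ m * Real.tan (π * t)))
    · -- pointwise limit
      filter_upwards [hae] with x hxt hx
      rw [uIoc_of_le ht0.le] at hx
      have hx0 : 0 < x := hx.1
      have hxt' : x < t := lt_of_le_of_ne hx.2 hxt
      have hb : (0 : ℝ) < 1 - x ^ 2 / t ^ 2 := by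
        have hx2 : x ^ 2 < t ^ 2 := by nlinarith
        have : x ^ 2 / t ^ 2 < 1 := (div_lt_one (by positivity)).mpr hx2
        linarith
      have hca : ContinuousAt (fun w : ℂ =>
          ((1 - x ^ 2 / t ^ 2 : ℝ) : ℂ) ^ (-w) * (x : ℂ) ^ m *
            (Real.tan (π * x) : ℂ)) 0 := by
        apply ContinuousAt.mul
        apply ContinuousAt.mul
        · exact (continuousAt_const_cpow
            (Complex.ofReal_ne_zero.mpr hb.ne')).comp continuous_neg.continuousAt
        · exact continuousAt_const
        · exact continuousAt_const
      exact (hca.tendsto).mono_left nhdsWithin_le_nhds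
  -- derivative of g at 0
  have hgderiv : HasDerivAt g (-(π : ℂ)) 0 := by
    have hA : HasDerivAt (fun w : ℂ => (t : ℂ) ^ (-(2 * w)))
        ((t : ℂ) ^ (-(2 * (0:ℂ))) * Complex.log t * (-2)) 0 := by
      have h1 : HasDerivAt (fun z : ℂ => (t : ℂ) ^ z)
          ((t : ℂ) ^ (-(2 * (0:ℂ))) * Complex.log t) (-(2 * (0:ℂ))) :=
        (Complex.hasStrictDerivAt_const_cpow (Or.inl htne)).hasDerivAt
      have h2 : HasDerivAt (fun w : ℂ => -(2 * w)) (-2) 0 := by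
        have h := ((hasDerivAt_id (0:ℂ)).const_mul (2:ℂ)).neg; simp at h; exact h
      exact h1.comp 0 h2
    have hB : HasDerivAt (fun w : ℂ => Complex.sin ((π : ℂ) * w))
        (Complex.cos ((π : ℂ) * 0) * π) 0 := by
      have h1 := Complex.hasDerivAt_sin ((π : ℂ) * 0)
      have h2 : HasDerivAt (fun w : ℂ => (π : ℂ) * w) (π : ℂ) 0 := by
        simpa using (hasDerivAt_id (0:ℂ)).const_mul (π : ℂ)
      exact h1.comp 0 h2
    have h3 := (hA.mul hB).neg
    have h4 : -((t : ℂ) ^ (-(2 * (0:ℂ))) * Complex.log t * (-2) *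
        Complex.sin ((π : ℂ) * 0) + (t : ℂ) ^ (-(2 * (0:ℂ))) *
        (Complex.cos ((π : ℂ) * 0) * π)) = -(π : ℂ) := by
      simp
    rw [h4] at h3
    have h5 : (fun w : ℂ => -((t : ℂ) ^ (-(2 * w)) * Complex.sin ((π : ℂ) * w))) = g := by
      funext w
      rw [hgdef]
      ring
    rw [← h5]; exact h3
  -- main derivative
  have key : HasDerivAt (fun w => g w * I w) (-(π : ℂ) * I 0) 0 := by
    rw [hasDerivAt_iff_tendsto_slope]
    have hslope : slope (fun w => g w * I w) 0 = fun w => slope g 0 w * I w := by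
      funext w
      simp only [slope_def_field, hg0, zero_mul, sub_zero]
      ring
    rw [hslope]
    exact (hasDerivAt_iff_tendsto_slope.mp hgderiv).mul hIcont
  have hval : -((∫ ξ in (0 : ℝ)..t, π * ξ ^ m * Real.tan (π * ξ) : ℝ) : ℂ)
      = -(π : ℂ) * I 0 := by
    rw [hI0]
    have h8 : (∫ ξ in (0 : ℝ)..t, π * ξ ^ m * Real.tan (π * ξ))
        = π * ∫ ξ in (0 : ℝ)..t, ξ ^ m * Real.tan (π * ξ) := by
      rw [← intervalIntegral.integral_const_mul]
      apply intervalIntegral.integral_congr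
      intro x _
      ring
    rw [h8]
    push_cast
    ring
  constructor
  · show g 0 * I 0 = 0
    rw [hg0, zero_mul]
  · show HasDerivAt (fun w => g w * I w) _ 0
    rw [hval]
    exact key
end

section
/- Let m \ge 0 be an integer, t > 0 a real number, \alpha a complex number with \Re(\alpha) > 0, and w a complex number with w \notin \{1, 2, \ldots, m+1\}. Then \int_{0}^{t} \xi^{m} (\xi+\alpha)^{-w} \, d\xi = \sum_{k=1}^{m+1} \frac{(-1)^{k-1} m!}{(m+1-k)!} \frac{t^{m+1-k} (t+\alpha)^{k-w}}{(1-w)_k} + (-1)^{m+1} m! \frac{\alpha^{m+1-w}}{(1-w)_{m+1}}, where all complex powers are principal-branch powers (well defined since \xi + \alpha, t+\alpha and \alpha have positive real part). -/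
/-- The Pochhammer symbol `(x)_k = x(x+1)⋯(x+k-1)`. -/
noncomputable def poch (x : ℂ) (k : ℕ) : ℂ := ∏ i ∈ Finset.range k, (x + i)

theorem statement17 (m : ℕ) (t : ℝ) (ht : 0 < t) (α : ℂ) (hα : 0 < α.re) (w : ℂ)
    (hw : ∀ k ∈ Finset.Icc 1 (m + 1), w ≠ (k : ℂ)) :
    ∫ ξ in (0 : ℝ)..t, (ξ : ℂ) ^ m * ((ξ : ℂ) + α) ^ (-w) =
      ∑ k ∈ Finset.Icc 1 (m + 1),
        ((-1 : ℂ) ^ (k - 1) * (m.factorial : ℂ) / ((m + 1 - k).factorial : ℂ)) *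
          ((t : ℂ) ^ (m + 1 - k) * ((t : ℂ) + α) ^ ((k : ℂ) - w) / poch (1 - w) k) +
      (-1 : ℂ) ^ (m + 1) * (m.factorial : ℂ) * α ^ (((m : ℂ) + 1) - w) / poch (1 - w) (m + 1) := by
  -- nonvanishing of the factors and of the Pochhammer symbols
  have hfac : ∀ j : ℕ, j ≤ m → (1 : ℂ) - w + j ≠ 0 := by
    intro j hj h0
    have := hw (j + 1) (by simp [Finset.mem_Icc]; omega)
    apply this
    push_cast
    linear_combination -h0
  have hP : ∀ k : ℕ, k ≤ m + 1 → poch (1 - w) k ≠ 0 := by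
    intro k hk
    unfold poch
    rw [Finset.prod_ne_zero_iff]
    intro i hi
    rw [Finset.mem_range] at hi
    exact hfac i (by omega)
  have hpochsucc : ∀ j : ℕ, poch (1 - w) (j + 1) = poch (1 - w) j * ((1 : ℂ) - w + j) := by
    intro j; simp [poch, Finset.prod_range_succ]
  -- the antiderivative
  set F : ℝ → ℂ := fun ξ => ∑ j ∈ Finset.range (m + 1),
      (-1 : ℂ) ^ j * (m.descFactorial j : ℂ) *
        ((ξ : ℂ) ^ (m - j) * ((ξ : ℂ) + α) ^ ((j : ℂ) + 1 - w)) / poch (1 - w) (j + 1)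
    with hFdef
  set G : ℂ → ℕ → ℂ := fun z j =>
      (-1 : ℂ) ^ j * (m.descFactorial j : ℂ) *
        (z ^ (m - j) * (z + α) ^ ((j : ℂ) - w)) / poch (1 - w) j with hGdef
  have key : ∀ ξ : ℝ, 0 ≤ ξ → HasDerivAt F ((ξ : ℂ) ^ m * ((ξ : ℂ) + α) ^ (-w)) ξ := by
    intro ξ hξ
    have hslit : (ξ : ℂ) + α ∈ Complex.slitPlane := by
      rw [Complex.mem_slitPlane_iff]
      left
      simp only [Complex.add_re, Complex.ofReal_re]
      linarith
    have h2 : ∀ c : ℂ, HasDerivAt (fun x : ℝ => ((x : ℂ) + α) ^ c)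
        (c * ((ξ : ℂ) + α) ^ (c - 1)) ξ := by
      intro c
      have := (((hasDerivAt_id ((ξ : ℂ))).add_const α).cpow_const (c := c) hslit).comp_ofReal
      simpa using this
    have hterm : ∀ j ∈ Finset.range (m + 1),
        HasDerivAt (fun x : ℝ => (-1 : ℂ) ^ j * (m.descFactorial j : ℂ) *
          ((x : ℂ) ^ (m - j) * ((x : ℂ) + α) ^ ((j : ℂ) + 1 - w)) / poch (1 - w) (j + 1))
        (G (ξ : ℂ) j - G (ξ : ℂ) (j + 1)) ξ := by
      intro j hj
      rw [Finset.mem_range] at hj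
      have h1 : HasDerivAt (fun x : ℝ => ((x : ℂ)) ^ (m - j))
          (((m - j : ℕ) : ℂ) * (ξ : ℂ) ^ (m - j - 1)) ξ :=
        (hasDerivAt_pow (m - j) ((ξ : ℂ))).comp_ofReal
      have h3 := ((h1.fun_mul (h2 ((j : ℂ) + 1 - w))).const_mul
        ((-1 : ℂ) ^ j * (m.descFactorial j : ℂ))).div_const (poch (1 - w) (j + 1))
      convert h3 using 1
      · rfl
      have hexp : (j : ℂ) + 1 - w - 1 = (j : ℂ) - w := by ring
      rw [hexp, hGdef]
      simp only [Nat.descFactorial_succ, Nat.cast_mul, Nat.cast_add, Nat.cast_one,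
        ← Nat.sub_sub, hpochsucc]
      have hpj : poch (1 - w) j ≠ 0 := hP j (by omega)
      have hf : (1 : ℂ) - w + j ≠ 0 := hfac j (by omega)
      have hcast : ((j : ℂ) + 1) - w = (j : ℂ) + 1 - w := by ring
      field_simp
      ring
    have hsum := HasDerivAt.fun_sum hterm
    rw [Finset.sum_range_sub' (fun j => G (ξ : ℂ) j)] at hsum
    have hG0 : G (ξ : ℂ) 0 = (ξ : ℂ) ^ m * ((ξ : ℂ) + α) ^ (-w) := by
      simp [hGdef, poch, zero_sub]
    have hGtop : G (ξ : ℂ) (m + 1) = 0 := by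
      simp [hGdef, Nat.descFactorial_eq_zero_iff_lt.mpr (Nat.lt_succ_self m)]
    rw [hG0, hGtop, sub_zero] at hsum
    exact hsum
  have hderiv : ∀ x ∈ Set.uIcc (0 : ℝ) t,
      HasDerivAt F ((x : ℂ) ^ m * ((x : ℂ) + α) ^ (-w)) x := by
    intro x hx
    rw [Set.uIcc_of_le ht.le] at hx
    exact key x hx.1
  have hcont : ContinuousOn (fun x : ℝ => (x : ℂ) ^ m * ((x : ℂ) + α) ^ (-w))
      (Set.uIcc (0 : ℝ) t) := by
    intro x hx
    rw [Set.uIcc_of_le ht.le] at hx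
    have hslit : (x : ℂ) + α ∈ Complex.slitPlane := by
      rw [Complex.mem_slitPlane_iff]
      left
      simp only [Complex.add_re, Complex.ofReal_re]
      linarith [hx.1]
    have hc1 : ContinuousAt (fun x : ℝ => ((x : ℂ) + α) ^ (-w)) x :=
      ((Complex.continuous_ofReal.add continuous_const).continuousAt).cpow
        continuousAt_const hslit
    exact (((Complex.continuous_ofReal.pow m).continuousAt.mul hc1)).continuousWithinAt
  have hint := intervalIntegral.integral_eq_sub_of_hasDerivAt hderiv
    (hcont.intervalIntegrable)
  rw [hint]
  -- compute F 0
  have hF0 : F 0 = (-1 : ℂ) ^ m * (m.factorial : ℂ) * α ^ ((m : ℂ) + 1 - w) /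
      poch (1 - w) (m + 1) := by
    simp only [hFdef]
    rw [Finset.sum_eq_single m]
    · simp [Nat.descFactorial_self]
    · intro j hj hne
      rw [Finset.mem_range] at hj
      have hlt : j < m := by omega
      simp [zero_pow (Nat.sub_ne_zero_of_lt hlt)]
    · intro h
      exact absurd (Finset.self_mem_range_succ m) h
  -- compute F t : reindex the Icc sum
  have hsumeq : ∑ k ∈ Finset.Icc 1 (m + 1),
        ((-1 : ℂ) ^ (k - 1) * (m.factorial : ℂ) / ((m + 1 - k).factorial : ℂ)) *
          ((t : ℂ) ^ (m + 1 - k) * ((t : ℂ) + α) ^ ((k : ℂ) - w) / poch (1 - w) k) = F t := by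
    rw [hFdef, ← Finset.Ico_add_one_right_eq_Icc, Finset.sum_Ico_eq_sum_range]
    simp only [Nat.succ_sub_one]
    apply Finset.sum_congr rfl
    intro j hj
    rw [Finset.mem_range] at hj
    have h1 : 1 + j - 1 = j := by omega
    have h2 : m + 1 - (1 + j) = m - j := by omega
    have h3 : ((1 + j : ℕ) : ℂ) - w = (j : ℂ) + 1 - w := by push_cast; ring
    have h4 : (1 + j) = j + 1 := by omega
    rw [h1, h2, h3, h4]
    have h5 : (m.factorial : ℂ) / ((m - j).factorial : ℂ) = (m.descFactorial j : ℂ) := by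
      rw [div_eq_iff (by exact_mod_cast (m - j).factorial_ne_zero)]
      rw [← Nat.cast_mul, mul_comm, Nat.factorial_mul_descFactorial (by omega)]
    rw [mul_div_assoc, h5]
    ring
  rw [hsumeq, hF0]
  have hexp2 : ((m : ℂ) + 1) - w = (m : ℂ) + 1 - w := by ring
  rw [hexp2]
  ring
end
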